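/- arXiv:1710.06821 — 8 statements merged into one kernel-verified Lean document; each statement's English description precedes it below -/
import Mathlib

section
/- Every monic post-critically finite quadratic polynomial with integer coefficients has one of the forms (x+a)^2 - a, (x+a)^2 - a - 1, or (x+a)^2 - a - 2 for some integer a. -/
private lemma iter_step (t : ℚ) (k : ℕ) :
    (fun z : ℚ => z ^ 2 + t)^[k + 1] 0 = ((fun z : ℚ => z ^ 2 + t)^[k] 0) ^ 2 + t :=
  Function.iterate_succ_apply' _ k 0

/-- If `t ≥ 1`, the orbit of `0` under `z ↦ z² + t` is strictly increasing (from step 1 on). -/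
private lemma grow_pos (t : ℚ) (ht : 1 ≤ t) :
    StrictMono fun n : ℕ => (fun z : ℚ => z ^ 2 + t)^[n + 1] 0 := by
  have key : ∀ n : ℕ, 1 ≤ (fun z : ℚ => z ^ 2 + t)^[n + 1] 0 := by
    intro n
    induction n with
    | zero => simpa using ht
    | succ n ih =>
      rw [iter_step]
      nlinarith
  apply strictMono_nat_of_lt_succ
  intro n
  have h1 := key n
  rw [iter_step t (n + 1)]
  nlinarith

/-- If `t ≤ -3`, the absolute values along the orbit of `0` under `z ↦ z² + t`
are strictly increasing (from step 1 on). -/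
private lemma grow_neg (t : ℚ) (ht : t ≤ -3) :
    StrictMono fun n : ℕ => |(fun z : ℚ => z ^ 2 + t)^[n + 1] 0| := by
  have key : ∀ n : ℕ, -t ≤ |(fun z : ℚ => z ^ 2 + t)^[n + 1] 0| := by
    intro n
    induction n with
    | zero =>
      rw [show (fun z : ℚ => z ^ 2 + t)^[0 + 1] 0 = t by norm_num,
        abs_of_nonpos (by linarith)]
    | succ n ih =>
      rw [iter_step]
      set z := (fun z : ℚ => z ^ 2 + t)^[n + 1] 0
      have h2 : z ^ 2 = |z| ^ 2 := (sq_abs z).symm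
      have h3 : -t ≤ z ^ 2 + t := by nlinarith
      rw [abs_of_nonneg (by linarith)]
      exact h3
  apply strictMono_nat_of_lt_succ
  intro n
  have h1 := key n
  rw [iter_step t (n + 1)]
  set z := (fun z : ℚ => z ^ 2 + t)^[n + 1] 0
  have h2 : z ^ 2 = |z| ^ 2 := (sq_abs z).symm
  have h3 : |z| + 1 ≤ z ^ 2 + t := by nlinarith
  have h4 : (0:ℚ) ≤ z ^ 2 + t := by nlinarith [abs_nonneg z]
  rw [abs_of_nonneg h4]
  linarith

/-- If `t = m/4` with `m` odd, the orbit of `0` under `z ↦ z² + t` consists of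
fractions with odd numerator and denominator `2 ^ 2 ^ n`. -/
private lemma odd_denom (m : ℤ) (hm : Odd m) (n : ℕ) :
    ∃ k : ℤ, Odd k ∧
      (fun z : ℚ => z ^ 2 + (m : ℚ) / 4)^[n + 1] 0 = (k : ℚ) / 2 ^ 2 ^ (n + 1) := by
  induction n with
  | zero => exact ⟨m, hm, by norm_num⟩
  | succ n ih =>
    obtain ⟨k, hk, hu⟩ := ih
    have hE : 2 ≤ 2 ^ (n + 1) := Nat.one_lt_two_pow (by omega)
    refine ⟨k ^ 2 + m * 2 ^ (2 ^ (n + 1) * 2 - 2), ?_, ?_⟩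
    · refine (hk.pow).add_even ?_
      refine Even.mul_left ?_ m
      have he : 2 ^ (n + 1) * 2 - 2 = (2 ^ (n + 1) * 2 - 3) + 1 := by omega
      exact ⟨2 ^ (2 ^ (n + 1) * 2 - 3), by rw [he, pow_succ]; ring⟩
    · rw [iter_step, hu]
      have hsplit : 2 ^ (n + 1) * 2 - 2 + 2 = 2 ^ (n + 1) * 2 := by omega
      have hD : (2:ℚ) ^ (2 ^ (n + 1) * 2 - 2) = 2 ^ (2 ^ (n + 1) * 2) / 4 := by
        rw [eq_div_iff (by norm_num), show (4:ℚ) = 2 ^ 2 by norm_num, ← pow_add, hsplit]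
      push_cast
      rw [hD]
      have h1 : (2:ℚ) ^ 2 ^ (n + 2) = (2 ^ 2 ^ (n + 1)) ^ 2 := by
        rw [← pow_mul, ← pow_succ]
      rw [h1, show 2 ^ (n + 1) * 2 = 2 ^ (n + 2) by rw [← pow_succ], h1]
      field_simp

/-- In the odd-numerator case the orbit map is injective. -/
private lemma inj_of_odd (m : ℤ) (hm : Odd m) :
    Function.Injective fun n : ℕ => (fun z : ℚ => z ^ 2 + (m : ℚ) / 4)^[n + 1] 0 := by
  have key : ∀ i j : ℕ, i < j →
      (fun z : ℚ => z ^ 2 + (m : ℚ) / 4)^[i + 1] 0 ≠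
      (fun z : ℚ => z ^ 2 + (m : ℚ) / 4)^[j + 1] 0 := by
    intro i j hij heq
    obtain ⟨k, hk, hu⟩ := odd_denom m hm i
    obtain ⟨k', hk', hu'⟩ := odd_denom m hm j
    rw [hu, hu'] at heq
    have hAB : 2 ^ (i + 1) < 2 ^ (j + 1) :=
      Nat.pow_lt_pow_right (by norm_num) (by omega)
    rw [div_eq_div_iff (by positivity) (by positivity)] at heq
    have hZ : k * 2 ^ 2 ^ (j + 1) = k' * 2 ^ 2 ^ (i + 1) := by exact_mod_cast heq
    have hB : 2 ^ (j + 1) = 2 ^ (j + 1) - 2 ^ (i + 1) + 2 ^ (i + 1) := by omega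
    rw [hB, pow_add, ← mul_assoc] at hZ
    have h1 : k * 2 ^ (2 ^ (j + 1) - 2 ^ (i + 1)) = k' :=
      mul_right_cancel₀ (by positivity) hZ
    have hd : 2 ^ (j + 1) - 2 ^ (i + 1) ≠ 0 := by omega
    rcases Nat.exists_eq_succ_of_ne_zero hd with ⟨d, hdd⟩
    have : Even k' := ⟨k * 2 ^ d, by rw [← h1, hdd, pow_succ]; ring⟩
    exact (Int.not_odd_iff_even.mpr this) hk'
  intro i j heq
  rcases lt_trichotomy i j with h | h | h
  · exact absurd heq (key i j h)
  · exact h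
  · exact absurd heq.symm (key j i h)

/-- Every monic PCF quadratic polynomial with integer coefficients has one of the forms
`(x+a)^2 - a`, `(x+a)^2 - a - 1`, `(x+a)^2 - a - 2` for some integer `a`. -/
theorem stmt0 (b c : ℤ) (f : ℚ → ℚ) (hf : ∀ x, f x = x ^ 2 + (b : ℚ) * x + (c : ℚ))
    (crit : ℚ) (hcrit : crit = -(b : ℚ) / 2)
    (hfin : {y : ℚ | ∃ n : ℕ, 1 ≤ n ∧ f^[n] crit = y}.Finite) :
    ∃ a : ℤ,
      (∀ x : ℚ, f x = (x + (a : ℚ)) ^ 2 - (a : ℚ)) ∨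
      (∀ x : ℚ, f x = (x + (a : ℚ)) ^ 2 - (a : ℚ) - 1) ∨
      (∀ x : ℚ, f x = (x + (a : ℚ)) ^ 2 - (a : ℚ) - 2) := by
  set t : ℚ := (c : ℚ) - (b : ℚ) ^ 2 / 4 + (b : ℚ) / 2 with ht
  have horb : ∀ n : ℕ, f^[n] crit = (fun z : ℚ => z ^ 2 + t)^[n] 0 - (b : ℚ) / 2 := by
    intro n
    induction n with
    | zero =>
      simp only [Function.iterate_zero, id_eq, hcrit]
      ring
    | succ n ih =>
      rw [Function.iterate_succ_apply' f, iter_step, ih, hf, ht]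
      ring
  have hT : {y : ℚ | ∃ n : ℕ, 1 ≤ n ∧ (fun z : ℚ => z ^ 2 + t)^[n] 0 = y}.Finite := by
    apply (hfin.image (fun y => y + (b : ℚ) / 2)).subset
    rintro y ⟨n, hn, rfl⟩
    exact ⟨f^[n] crit, ⟨n, hn, rfl⟩, by rw [horb n]; ring⟩
  have hmem : ∀ n : ℕ, (fun z : ℚ => z ^ 2 + t)^[n + 1] 0 ∈
      {y : ℚ | ∃ n : ℕ, 1 ≤ n ∧ (fun z : ℚ => z ^ 2 + t)^[n] 0 = y} := by
    intro n; exact ⟨n + 1, by omega, rfl⟩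
  rcases Int.even_or_odd b with ⟨a, hb⟩ | ⟨a, hb⟩
  · -- b = a + a, even case
    have ht' : t = ((c - a ^ 2 + a : ℤ) : ℚ) := by
      rw [ht, hb]; push_cast; ring
    set e : ℤ := c - a ^ 2 + a with he
    have hrange : -2 ≤ e ∧ e ≤ 0 := by
      by_contra hcon
      have : 1 ≤ e ∨ e ≤ -3 := by omega
      rcases this with h1 | h1
      · have hmono := grow_pos t (by rw [ht']; exact_mod_cast h1)
        exact absurd hT
          (Set.infinite_of_injective_forall_mem hmono.injective hmem)
      · have hmono := grow_neg t (by rw [ht']; exact_mod_cast h1)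
        have hinj : Function.Injective
            fun n : ℕ => (fun z : ℚ => z ^ 2 + t)^[n + 1] 0 := by
          intro i j hij
          exact hmono.injective (congrArg abs hij)
        exact absurd hT
          (Set.infinite_of_injective_forall_mem hinj hmem)
    have hc : (c : ℚ) = (a : ℚ) ^ 2 - a + e := by
      have h2 : c = e + a ^ 2 - a := by omega
      rw [h2]; push_cast; ring
    refine ⟨a, ?_⟩
    have hcase : e = 0 ∨ e = -1 ∨ e = -2 := by omega
    rcases hcase with h0 | h0 | h0
    · exact Or.inl (fun x => by rw [hf, hc, hb, h0]; push_cast; ring)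
    · exact Or.inr (Or.inl (fun x => by rw [hf, hc, hb, h0]; push_cast; ring))
    · exact Or.inr (Or.inr (fun x => by rw [hf, hc, hb, h0]; push_cast; ring))
  · -- b = 2a + 1, odd case: contradiction
    exfalso
    have hm : Odd (4 * c - 4 * a ^ 2 + 1) := ⟨2 * c - 2 * a ^ 2, by ring⟩
    have ht' : t = ((4 * c - 4 * a ^ 2 + 1 : ℤ) : ℚ) / 4 := by
      rw [ht, hb]; push_cast; ring
    have hinj := inj_of_odd _ hm
    rw [← ht'] at hinj
    exact absurd hT
      (Set.infinite_of_injective_forall_mem hinj hmem)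
end

section
/- Let a ∈ ℤ and let f(x) = (x+a)^2 - a be irreducible over ℚ. Then f^n is irreducible over ℚ for all n ≥ 1 if and only if f^2 is irreducible over ℚ. -/
open Polynomial

/-- The `n`-th iterate of a polynomial under composition. -/
noncomputable def iter {R : Type*} [CommRing R] (f : Polynomial R) : ℕ → Polynomial R
  | 0 => Polynomial.X
  | n + 1 => f.comp (iter f n)

open IntermediateField

universe u

lemma gen_isIntegral {K : Type u} [Field K] {a : K} {E : Type u} [Field E] [Algebra K E]
    (x : E) (hx : minpoly K x = X ^ 2 - C a) : IsIntegral K x := by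
  by_contra h
  have := minpoly.eq_zero h
  rw [hx] at this
  exact X_pow_sub_C_ne_zero two_pos a this

lemma gen_sq {K : Type u} [Field K] {a : K} {E : Type u} [Field E] [Algebra K E]
    (x : E) (hx : minpoly K x = X ^ 2 - C a) :
    (AdjoinSimple.gen K x) ^ 2 = algebraMap K K⟮x⟯ a := by
  have h := IntermediateField.aeval_gen_minpoly K x
  rw [hx] at h
  simpa [sub_eq_zero] using h

lemma sq_ne_gen {K : Type u} [Field K] {a : K} (h4 : ∀ b : K, -4 * b ^ 4 ≠ a)
    (E : Type u) [Field E] [Algebra K E] (x : E) (hx : minpoly K x = X ^ 2 - C a) :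
    ∀ b : K⟮x⟯, b ^ 2 ≠ AdjoinSimple.gen K x := by
  intro b hb
  set g := AdjoinSimple.gen K x with hg
  have hint : IsIntegral K x := gen_isIntegral x hx
  have hg2 : g ^ 2 = algebraMap K K⟮x⟯ a := gen_sq x hx
  set pb := IntermediateField.adjoin.powerBasis hint with hpb
  have hdim : pb.dim = 2 := by
    rw [hpb, IntermediateField.adjoin.powerBasis_dim, hx, natDegree_X_pow_sub_C]
  set B := pb.basis.reindex (finCongr hdim) with hB
  have hB0 : B 0 = 1 := by
    simp [hB, Module.Basis.reindex_apply, PowerBasis.coe_basis]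
  have hB1 : B 1 = g := by
    simp [hB, Module.Basis.reindex_apply, PowerBasis.coe_basis, hpb,
      IntermediateField.adjoin.powerBasis_gen, hg]
  have huv : ∀ u v : K, algebraMap K K⟮x⟯ u + algebraMap K K⟮x⟯ v * g = 0 → u = 0 ∧ v = 0 := by
    intro u v h
    have h' : u • B 0 + v • B 1 = 0 := by
      rw [hB0, hB1, Algebra.smul_def, Algebra.smul_def, mul_one]
      exact h
    have h0 : (B.repr (u • B 0 + v • B 1)) 0 = 0 := by rw [h']; simp
    have h1 : (B.repr (u • B 0 + v • B 1)) 1 = 0 := by rw [h']; simp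
    rw [LinearEquiv.map_add, LinearEquiv.map_smul, LinearEquiv.map_smul, B.repr_self, B.repr_self] at h0 h1
    simp [Finsupp.single_apply] at h0 h1
    exact ⟨h0, h1⟩
  set c := B.repr b 0 with hc
  set d := B.repr b 1 with hd
  have hbrep : b = algebraMap K K⟮x⟯ c + algebraMap K K⟮x⟯ d * g := by
    have := B.sum_repr b
    rw [Fin.sum_univ_two, hB0, hB1] at this
    rw [← this, Algebra.smul_def, Algebra.smul_def, mul_one]
  have key : algebraMap K K⟮x⟯ (c ^ 2 + a * d ^ 2) + algebraMap K K⟮x⟯ (2 * c * d - 1) * g = 0 := by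
    simp only [map_add, map_mul, map_sub, map_one, map_pow, map_ofNat]
    linear_combination (-(b + algebraMap K K⟮x⟯ c + algebraMap K K⟮x⟯ d * g)) * hbrep + hb
      - (algebraMap K K⟮x⟯ d) ^ 2 * hg2
  obtain ⟨h1, h2⟩ := huv _ _ key
  apply h4 c
  linear_combination (-4 * c ^ 2) * h1 + (a * (2 * c * d + 1)) * h2

lemma quartic {K : Type u} [Field K] {a : K} (h2 : ∀ b : K, b ^ 2 ≠ a)
    (h4 : ∀ b : K, -4 * b ^ 4 ≠ a) : Irreducible (X ^ 4 - C a) := by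
  have h2' : Irreducible (X ^ 2 - C a) := X_pow_sub_C_irreducible_of_prime Nat.prime_two h2
  rw [show (4 : ℕ) = 2 * 2 from rfl]
  exact X_pow_mul_sub_C_irreducible h2' fun E _ _ x hx =>
    X_pow_sub_C_irreducible_of_prime Nat.prime_two (sq_ne_gen h4 E x hx)

lemma no_deg4_root {K : Type u} [Field K] {a : K} (hq : Irreducible (X ^ 4 - C a))
    (E : Type u) [Field E] [Algebra K E] (x : E) (hx : minpoly K x = X ^ 2 - C a) :
    ∀ e : K⟮x⟯, e ^ 4 ≠ algebraMap K K⟮x⟯ a := by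
  intro e he
  have hint : IsIntegral K x := gen_isIntegral x hx
  set pb := IntermediateField.adjoin.powerBasis hint with hpb
  have hdim : pb.dim = 2 := by
    rw [hpb, IntermediateField.adjoin.powerBasis_dim, hx, natDegree_X_pow_sub_C]
  have : FiniteDimensional K K⟮x⟯ := pb.finite
  have hmin : X ^ 4 - C a = minpoly K e := by
    refine minpoly.eq_of_irreducible_of_monic hq ?_ (monic_X_pow_sub_C a (by norm_num))
    rw [map_sub, map_pow, aeval_X, aeval_C, he, sub_self]
  have hle : (minpoly K e).natDegree ≤ Module.finrank K K⟮x⟯ := minpoly.natDegree_le e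
  rw [← hmin, natDegree_X_pow_sub_C, pb.finrank, hdim] at hle
  omega

lemma key_pow (m : ℕ) : ∀ {K : Type u} [Field K] (a : K), (∀ b : K, b ^ 2 ≠ a) →
    (∀ b : K, -4 * b ^ 4 ≠ a) → Irreducible (X ^ 2 ^ m - C a) := by
  induction m with
  | zero => intro K _ a h2 h4; simpa using irreducible_X_sub_C a
  | succ m IH =>
    intro K _ a h2 h4
    have hq := quartic h2 h4
    have h2' : Irreducible (X ^ 2 - C a) := X_pow_sub_C_irreducible_of_prime Nat.prime_two h2
    rw [show (2 : ℕ) ^ (m + 1) = 2 ^ m * 2 by ring]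
    apply X_pow_mul_sub_C_irreducible h2'
    intro E _ _ x hx
    have hg2 : (AdjoinSimple.gen K x) ^ 2 = algebraMap K K⟮x⟯ a := gen_sq x hx
    apply IH
    · intro b hb
      apply no_deg4_root hq E x hx b
      calc b ^ 4 = (b ^ 2) ^ 2 := by ring
        _ = algebraMap K K⟮x⟯ a := by rw [hb, hg2]
    · intro b hb
      apply no_deg4_root hq E x hx (2 * b ^ 2)
      have : (2 * b ^ 2) ^ 4 = (-4 * b ^ 4) ^ 2 := by ring
      rw [this, hb, hg2]

lemma iter_eq (b : ℚ) (f : Polynomial ℚ) (hf : f = (X + C b) ^ 2 - C b) (n : ℕ) :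
    iter f n = (X + C b) ^ 2 ^ n - C b := by
  induction n with
  | zero => simp [iter]
  | succ n ih =>
    show f.comp (iter f n) = _
    rw [ih, hf]
    simp only [sub_comp, pow_comp, add_comp, X_comp, C_comp, sub_add_cancel]
    rw [← pow_mul, ← pow_succ]

lemma transfer (b : ℚ) (f : Polynomial ℚ) (hf : f = (X + C b) ^ 2 - C b) (n : ℕ) :
    Irreducible (iter f n) ↔ Irreducible (X ^ 2 ^ n - C b) := by
  rw [iter_eq b f hf n]
  have h : (X + C b) ^ 2 ^ n - C b = (algEquivAevalXAddC b) (X ^ 2 ^ n - C b) := by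
    simp [algEquivAevalXAddC_apply, sub_comp, pow_comp, X_comp, C_comp]
  rw [h]
  exact MulEquiv.irreducible_iff (algEquivAevalXAddC b).toMulEquiv

/-- `f(x) = (x+a)^2 - a` irreducible over ℚ is stable iff its second iterate is irreducible. -/
theorem stmt3 (a : ℤ) (f : Polynomial ℚ)
    (hf : f = (X + C (a : ℚ)) ^ 2 - C (a : ℚ)) (hirr : Irreducible f) :
    (∀ n : ℕ, 1 ≤ n → Irreducible (iter f n)) ↔ Irreducible (iter f 2) := by
  constructor
  · intro h; exact h 2 (by norm_num)
  · intro h2 n hn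
    rw [transfer _ f hf] at h2 ⊢
    have hc2 : ∀ c : ℚ, c ^ 2 ≠ (a : ℚ) :=
      pow_ne_of_irreducible_X_pow_sub_C h2 (by norm_num) (by norm_num)
    have hc4 : ∀ c : ℚ, -4 * c ^ 4 ≠ (a : ℚ) := by
      intro c hc
      have hfact : X ^ 2 ^ 2 - C (a : ℚ) =
          (X ^ 2 + C (2 * c) * X + C (2 * c ^ 2)) *
            (X ^ 2 - C (2 * c) * X + C (2 * c ^ 2)) := by
        rw [← hc]
        simp only [map_neg, map_mul, map_pow, map_ofNat]
        ring
      rcases h2.isUnit_or_isUnit hfact with h | h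
      · have hd := natDegree_eq_zero_of_isUnit h
        have hdeg : (X ^ 2 + C (2 * c) * X + C (2 * c ^ 2) : Polynomial ℚ).natDegree = 2 := by
          compute_degree!
        omega
      · have hd := natDegree_eq_zero_of_isUnit h
        have hdeg : (X ^ 2 - C (2 * c) * X + C (2 * c ^ 2) : Polynomial ℚ).natDegree = 2 := by
          compute_degree!
        omega
    exact key_pow n _ hc2 hc4
end

section
/- Let a ∈ ℤ and let f(x) = (x+a)^2 - a - 2 ∈ ℤ[x] be irreducible over ℚ. Then f^2(x) is reducible over ℚ if and only if a = 2 - (2v^2 - 2)^2 for some v ∈ ℤ. -/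
open Polynomial

lemma rat_int_of_sq (q : ℚ) (n : ℤ) (h : q ^ 2 = (n : ℚ)) : ∃ m : ℤ, (m : ℚ) = q := by
  have hint : IsIntegral ℤ q := by
    refine ⟨X ^ 2 - C n, monic_X_pow_sub_C n (by norm_num), ?_⟩
    simp only [eval₂_sub, eval₂_pow, eval₂_X, eval₂_C]
    simp [h]
  exact IsIntegrallyClosed.isIntegral_iff.mp hint

lemma monic_quad_eq {K : Type*} [Field K] (p : K[X]) (hm : p.Monic)
    (h2 : p.natDegree = 2) : p = X ^ 2 + C (p.coeff 1) * X + C (p.coeff 0) := by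
  have hc2 : p.coeff 2 = 1 := by
    have := hm.coeff_natDegree
    rwa [h2] at this
  ext n
  match n with
  | 0 => simp
  | 1 => simp
  | 2 => simp [hc2, coeff_X_pow]
  | (n+3) =>
    rw [p.coeff_eq_zero_of_natDegree_lt (by omega)]
    simp [coeff_X_pow, coeff_C]

lemma quad_not_unit (b d : ℚ) : ¬ IsUnit (X ^ 2 + C b * X + C d) := by
  intro h
  have hd : (X ^ 2 + C b * X + C d).natDegree = 2 := by compute_degree!
  have h0 : (X ^ 2 + C b * X + C d).natDegree = 0 :=
    natDegree_eq_of_degree_eq_some (by exact_mod_cast Polynomial.isUnit_iff_degree_eq_zero.mp h)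
  omega

/-- For irreducible `f(x) = (x+a)^2 - a - 2`, the second iterate is reducible over ℚ
iff `a = 2 - (2v^2 - 2)^2` for some integer `v`. -/
theorem stmt4 (a : ℤ) (f : Polynomial ℚ)
    (hf : f = (X + C (a : ℚ)) ^ 2 - C (a : ℚ) - 2) (hirr : Irreducible f) :
    ¬ Irreducible (iter f 2) ↔ ∃ v : ℤ, a = 2 - (2 * v ^ 2 - 2) ^ 2 := by
  have hF2 : iter f 2 = f.comp f := by
    show f.comp (f.comp X) = f.comp f
    rw [comp_X]
  have hFF : f.comp f = ((X + C (a:ℚ)) ^ 2 - 2) ^ 2 - C (a:ℚ) - 2 := by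
    conv_lhs => rw [hf]
    simp only [sub_comp, add_comp, pow_comp, X_comp, C_comp, ofNat_comp]
    push_cast
    ring
  -- `a + 2` is not a rational square, since `f` is irreducible
  have nosq : ∀ r : ℚ, r ^ 2 ≠ (a : ℚ) + 2 := by
    intro r hr
    have hCr : (C r : ℚ[X]) ^ 2 = C (a:ℚ) + 2 := by
      rw [← map_pow, hr]
      simp only [map_add, map_ofNat]
    have hfac : f = (X - C (r - a)) * (X - C (-r - a)) := by
      rw [hf]
      simp only [map_sub, map_neg]
      linear_combination hCr
    rcases hirr.isUnit_or_isUnit hfac with h | h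
    · exact not_isUnit_X_sub_C _ h
    · exact not_isUnit_X_sub_C _ h
  constructor
  · -- forward direction
    intro hni
    rw [hF2] at hni
    set e := algEquivAevalXAddC (-(a:ℚ)) with he
    have hEG : e (f.comp f) = X ^ 4 - C 4 * X ^ 2 + C (2 - (a:ℚ)) := by
      rw [hFF]
      simp only [he, algEquivAevalXAddC_apply, map_sub, map_add, map_pow, map_ofNat, aeval_X,
        aeval_C, algebraMap_eq, map_neg]
      ring
    set G : ℚ[X] := X ^ 4 - C 4 * X ^ 2 + C (2 - (a:ℚ)) with hGdef
    have hGni : ¬ Irreducible G := by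
      rw [← hEG]
      rwa [MulEquiv.irreducible_iff]
    have hGdeg : G.natDegree = 4 := by
      rw [hGdef]; compute_degree!
    have hGm : G.Monic := by
      rw [hGdef]; monicity!
    have hG0 : G ≠ 0 := fun h => by simp [h] at hGdeg
    have hGu : ¬ IsUnit G := by
      intro h
      have : G.natDegree = 0 :=
        natDegree_eq_of_degree_eq_some (by exact_mod_cast Polynomial.isUnit_iff_degree_eq_zero.mp h)
      omega
    -- G has no rational root
    have hnoroot : ∀ r : ℚ, G.eval r ≠ 0 := by
      intro r hr
      apply nosq (r ^ 2 - 2)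
      have h0 : r ^ 4 - 4 * r ^ 2 + (2 - (a:ℚ)) = 0 := by
        simpa [hGdef] using hr
      linear_combination h0
    have hlin : ∀ r : ℚ[X], r.natDegree = 1 → r ∣ G → False := by
      intro r h1 hdvd
      obtain ⟨c, hc0, b, hcb⟩ := natDegree_eq_one.mp h1
      obtain ⟨s, hs⟩ := hdvd
      apply hnoroot (-b / c)
      rw [hs, ← hcb]
      simp only [eval_mul, eval_add, eval_C, eval_X]
      have : c * (-b / c) + b = 0 := by
        field_simp
        ring
      rw [this, zero_mul]
    rw [irreducible_iff] at hGni
    push_neg at hGni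
    obtain ⟨p, q, hpq, hpu, hqu⟩ := hGni hGu
    have hp0 : p ≠ 0 := fun h => hG0 (by rw [hpq, h, zero_mul])
    have hq0 : q ≠ 0 := fun h => hG0 (by rw [hpq, h, mul_zero])
    have hdsum : p.natDegree + q.natDegree = 4 := by
      rw [← natDegree_mul hp0 hq0, ← hpq, hGdeg]
    have hdpos : ∀ r : ℚ[X], r ≠ 0 → ¬ IsUnit r → 1 ≤ r.natDegree := by
      intro r hr0 hru
      by_contra h
      push_neg at h
      have h0 : r.natDegree = 0 := by omega
      refine hru ?_
      rw [eq_C_of_natDegree_eq_zero h0]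
      refine isUnit_C.mpr (isUnit_iff_ne_zero.mpr fun hc => hr0 ?_)
      rw [eq_C_of_natDegree_eq_zero h0, hc, map_zero]
    have hpd := hdpos p hp0 hpu
    have hqd := hdpos q hq0 hqu
    -- degree 1 factors are impossible
    have hp1 : p.natDegree ≠ 1 := fun h => hlin p h ⟨q, hpq⟩
    have hq1 : q.natDegree ≠ 1 := fun h => hlin q h ⟨p, by rw [hpq, mul_comm]⟩
    have hpd2 : p.natDegree = 2 := by omega
    have hqd2 : q.natDegree = 2 := by omega
    -- make the factors monic
    set p' : ℚ[X] := p * C p.leadingCoeff⁻¹ with hp'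
    set q' : ℚ[X] := q * C q.leadingCoeff⁻¹ with hq'
    have hlc : p.leadingCoeff * q.leadingCoeff = 1 := by
      have := hGm
      rw [hpq] at this
      rwa [Monic, leadingCoeff_mul] at this
    have hCu : (C p.leadingCoeff⁻¹ : ℚ[X]) * C q.leadingCoeff⁻¹ = 1 := by
      rw [← map_mul, ← mul_inv, hlc]
      simp
    have hpq' : G = p' * q' := by
      rw [hpq, hp', hq']
      linear_combination (-(p * q)) * hCu
    have hp'm : p'.Monic := monic_mul_leadingCoeff_inv hp0
    have hq'm : q'.Monic := monic_mul_leadingCoeff_inv hq0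
    have hp'd : p'.natDegree = 2 := by
      rw [hp', natDegree_mul_C (inv_ne_zero (leadingCoeff_ne_zero.mpr hp0))]
      exact hpd2
    have hq'd : q'.natDegree = 2 := by
      rw [hq', natDegree_mul_C (inv_ne_zero (leadingCoeff_ne_zero.mpr hq0))]
      exact hqd2
    set b := p'.coeff 1
    set d := p'.coeff 0
    set b₂ := q'.coeff 1
    set d₂ := q'.coeff 0
    have hGeq : X ^ 4 - C 4 * X ^ 2 + C (2 - (a:ℚ))
        = X ^ 4 + C (b + b₂) * X ^ 3 + C (d + d₂ + b * b₂) * X ^ 2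
          + C (b * d₂ + b₂ * d) * X + C (d * d₂) := by
      rw [← hGdef, hpq', monic_quad_eq p' hp'm hp'd, monic_quad_eq q' hq'm hq'd]
      simp only [map_add, map_mul]
      ring
    have h3 := congrArg (fun P : ℚ[X] => P.coeff 3) hGeq
    have h2 := congrArg (fun P : ℚ[X] => P.coeff 2) hGeq
    have h1 := congrArg (fun P : ℚ[X] => P.coeff 1) hGeq
    have h0 := congrArg (fun P : ℚ[X] => P.coeff 0) hGeq
    simp only [coeff_add, coeff_sub, coeff_C_mul, coeff_X_pow, coeff_C, coeff_X] at h3 h2 h1 h0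
    norm_num at h3 h2 h1 h0
    -- h3 : 0 = b + b₂, h2 : -4 = d + d₂ + b*b₂, h1 : 0 = b*d₂ + b₂*d, h0 : 2 - a = d*d₂
    have hb₂ : b₂ = -b := by linarith
    rw [hb₂] at h2 h1
    have hsplit : b * (d₂ - d) = 0 := by linarith
    rcases mul_eq_zero.mp hsplit with hb | hdd
    · -- b = 0 : then a + 2 is a rational square, contradiction
      exfalso
      apply nosq ((d - d₂) / 2)
      have hsum : d + d₂ = -4 := by
        rw [hb] at h2
        linarith
      have hprod : d * d₂ = 2 - (a:ℚ) := by linarith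
      linear_combination ((d + d₂ - 4) / 4) * hsum - hprod
    · -- d₂ = d
      have hd2 : d₂ = d := by linarith
      rw [hd2] at h2 h0
      have hbsq : b ^ 2 = 2 * d + 4 := by linear_combination h2
      have hdsq : d ^ 2 = ((2 - a : ℤ) : ℚ) := by push_cast; linear_combination -h0
      obtain ⟨m, hm⟩ := rat_int_of_sq d _ hdsq
      have hbsq' : b ^ 2 = ((2 * m + 4 : ℤ) : ℚ) := by
        push_cast
        rw [hm]
        linarith
      obtain ⟨k, hk⟩ := rat_int_of_sq b _ hbsq'
      have hkk : k ^ 2 = 2 * m + 4 := by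
        have : ((k : ℚ)) ^ 2 = ((2 * m + 4 : ℤ) : ℚ) := by rw [hk]; exact hbsq'
        exact_mod_cast this
      have hkeven : Even k := by
        have hek : Even (k ^ 2) := ⟨m + 2, by linarith⟩
        exact (Int.even_pow.mp hek).1
      obtain ⟨v, hv⟩ := hkeven
      refine ⟨v, ?_⟩
      have hma : m ^ 2 = 2 - a := by
        have : ((m : ℚ)) ^ 2 = ((2 - a : ℤ) : ℚ) := by rw [hm]; exact hdsq
        exact_mod_cast this
      have h4v : 4 * v ^ 2 = 2 * m + 4 := by
        have hvv : (v + v) ^ 2 = 2 * m + 4 := by rw [← hv]; exact hkk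
        linear_combination hvv
      have hmv : m = 2 * v ^ 2 - 2 := by linarith
      rw [← hmv]
      linarith [hma]
  · -- reverse direction
    rintro ⟨v, hv⟩ hI
    rw [hF2] at hI
    have hva : (a : ℚ) = 2 - (2 * (v:ℚ) ^ 2 - 2) ^ 2 := by exact_mod_cast hv
    have hCa : (C (a:ℚ) : ℚ[X]) = 2 - (2 * C (v:ℚ) ^ 2 - 2) ^ 2 := by
      rw [hva]
      simp only [map_sub, map_mul, map_pow, map_ofNat]
    have key : f.comp f
        = (X ^ 2 + C (2 * (a:ℚ) + 2 * (v:ℚ)) * X + C ((a:ℚ) ^ 2 + 2 * (v:ℚ) * (a:ℚ) + 2 * (v:ℚ) ^ 2 - 2))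
        * (X ^ 2 + C (2 * (a:ℚ) - 2 * (v:ℚ)) * X + C ((a:ℚ) ^ 2 - 2 * (v:ℚ) * (a:ℚ) + 2 * (v:ℚ) ^ 2 - 2)) := by
      rw [hFF]
      simp only [map_add, map_sub, map_mul, map_pow, map_ofNat]
      rw [hCa]
      ring
    rcases hI.isUnit_or_isUnit key with h | h
    · exact quad_not_unit _ _ h
    · exact quad_not_unit _ _ h
end

section
/- Let a ∈ ℤ and let f(x) = (x+a)^2 - a - 1 ∈ ℤ[x] be irreducible over ℚ. Then f^2(x) is irreducible over ℚ if and only if a ≠ -(2p^2-1)^2 for every p ∈ ℤ. -/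
open Polynomial

/-- A rational whose square is an integer is an integer. -/
lemma aux_rat_int_of_sq (c : ℚ) (k : ℤ) (h : c ^ 2 = (k : ℚ)) : ∃ m : ℤ, c = (m : ℚ) := by
  have hden : c.den ^ 2 = 1 := by
    have := congrArg Rat.den h
    simpa [Rat.den_pow] using this
  have : c.den = 1 := by nlinarith [c.pos, hden]
  exact ⟨c.num, (Rat.den_eq_one_iff c).mp this |>.symm⟩

/-- The key scalar computation from comparing coefficients. -/
lemma aux_alg (a : ℤ) (b c d e : ℚ) (h3 : b + d = 0) (h2 : c + e + b * d = -2)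
    (h1 : b * e + c * d = 0) (h0 : c * e = -(a : ℚ))
    (hns : ∀ s : ℚ, s ^ 2 ≠ (a : ℚ) + 1) : ∃ p : ℤ, a = -(2 * p ^ 2 - 1) ^ 2 := by
  have hd : d = -b := by linarith
  subst hd
  have hb : b * (e - c) = 0 := by ring_nf; ring_nf at h1; linarith
  rcases mul_eq_zero.mp hb with hb0 | hec
  · exfalso
    apply hns ((c - e) / 2)
    have hce : c + e = -2 := by rw [hb0] at h2; linarith
    nlinarith [h0, hce]
  · have hec' : e = c := by linarith
    rw [hec'] at h0 h2
    have hc2 : c ^ 2 = ((-a : ℤ) : ℚ) := by push_cast; nlinarith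
    obtain ⟨C0, hC0⟩ := aux_rat_int_of_sq c (-a) hc2
    have hb2 : b ^ 2 = ((2 * C0 + 2 : ℤ) : ℚ) := by
      push_cast
      rw [hC0] at h2
      linear_combination -h2
    obtain ⟨B, hB⟩ := aux_rat_int_of_sq b (2 * C0 + 2) hb2
    rw [hB] at hb2
    rw [hC0] at hc2
    have hBint : B ^ 2 = 2 * C0 + 2 := by exact_mod_cast hb2
    have hCint : C0 ^ 2 = -a := by exact_mod_cast hc2
    have hBeven : Even B := by
      have h2 : Even (B ^ 2) := ⟨C0 + 1, by linarith⟩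
      exact (Int.even_pow.mp h2).1
    obtain ⟨p, hp⟩ := hBeven
    subst hp
    refine ⟨p, ?_⟩
    have h4 : 4 * p ^ 2 = 2 * C0 + 2 := by linear_combination hBint
    have hC0eq : C0 = 2 * p ^ 2 - 1 := by linarith
    subst hC0eq
    linarith [hCint]

/-- For irreducible `f(x) = (x+a)^2 - a - 1`, the second iterate is irreducible over ℚ
iff `a ≠ -(2p^2-1)^2` for every integer `p`. -/
theorem stmt5 (a : ℤ) (f : Polynomial ℚ)
    (hf : f = (X + C (a : ℚ)) ^ 2 - C (a : ℚ) - 1) (hirr : Irreducible f) :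
    Irreducible (iter f 2) ↔ ∀ p : ℤ, a ≠ -(2 * p ^ 2 - 1) ^ 2 := by
  -- The shifted second iterate
  set H : Polynomial ℚ := X ^ 4 - 2 * X ^ 2 - C (a : ℚ) with hH
  have hHdeg : H.natDegree = 4 := by
    rw [hH]; compute_degree!
  have hHmonic : H.Monic := by
    rw [Monic, leadingCoeff, hHdeg, hH]
    compute_degree!
  have hHne : H ≠ 0 := hHmonic.ne_zero
  -- iter f 2 is H shifted
  have hiter : iter f 2 = (algEquivAevalXAddC (a : ℚ)) H := by
    show f.comp (f.comp X) = _
    simp only [algEquivAevalXAddC_apply, ← comp_eq_aeval, comp_X, hf, hH]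
    simp only [sub_comp, add_comp, pow_comp, X_comp, C_comp, one_comp, mul_comp, ofNat_comp]
    ring
  have hIrrIff : Irreducible (iter f 2) ↔ Irreducible H := by
    rw [hiter]
    exact MulEquiv.irreducible_iff (algEquivAevalXAddC (a : ℚ)).toMulEquiv
  -- a + 1 is not a rational square (from irreducibility of f)
  have hns : ∀ s : ℚ, s ^ 2 ≠ (a : ℚ) + 1 := by
    intro s hs
    have hfac : f = (X + C (a : ℚ) - C s) * (X + C (a : ℚ) + C s) := by
      rw [hf]
      have hCs : (C s : Polynomial ℚ) * C s = C (a : ℚ) + 1 := by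
        rw [← C_mul, ← sq, hs]; simp [C_add]
      linear_combination hCs
    rcases hirr.2 hfac with hu | hu
    · have := natDegree_eq_zero_of_isUnit hu
      have h1 : (X + C (a : ℚ) - C s).natDegree = 1 := by compute_degree!
      omega
    · have := natDegree_eq_zero_of_isUnit hu
      have h1 : (X + C (a : ℚ) + C s).natDegree = 1 := by compute_degree!
      omega
  -- H has no rational root
  have hnoroot : ∀ r : ℚ, eval r H ≠ 0 := by
    intro r hr
    rw [hH] at hr
    simp only [eval_sub, eval_pow, eval_mul, eval_X, eval_C, eval_ofNat] at hr
    exact hns (r ^ 2 - 1) (by nlinarith)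
  rw [hIrrIff]
  constructor
  · -- Irreducible H → ∀ p, a ≠ ...
    intro hHirr p hp
    have hfac : H = (X ^ 2 + C (2 * p : ℚ) * X + C ((2 * p ^ 2 - 1 : ℤ) : ℚ)) *
        (X ^ 2 - C (2 * p : ℚ) * X + C ((2 * p ^ 2 - 1 : ℤ) : ℚ)) := by
      rw [hH, hp]
      push_cast
      simp only [map_neg, map_sub, map_mul, map_pow, map_one, map_ofNat]
      ring
    have hd1 : (X ^ 2 + C (2 * p : ℚ) * X + C ((2 * p ^ 2 - 1 : ℤ) : ℚ)).natDegree = 2 := by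
      compute_degree!
    have hd2 : (X ^ 2 - C (2 * p : ℚ) * X + C ((2 * p ^ 2 - 1 : ℤ) : ℚ)).natDegree = 2 := by
      compute_degree!
    rcases hHirr.2 hfac with hu | hu
    · have := natDegree_eq_zero_of_isUnit hu
      omega
    · have := natDegree_eq_zero_of_isUnit hu
      omega
  · -- ∀ p, a ≠ ... → Irreducible H
    intro hp
    constructor
    · intro hu
      have := natDegree_eq_zero_of_isUnit hu
      omega
    intro u v huv
    by_contra hcon
    push_neg at hcon
    obtain ⟨hu, hv⟩ := hcon
    have hune : u ≠ 0 := fun h => hHne (by rw [huv, h, zero_mul])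
    have hvne : v ≠ 0 := fun h => hHne (by rw [huv, h, mul_zero])
    have hsum : u.natDegree + v.natDegree = 4 := by
      rw [← natDegree_mul hune hvne, ← huv, hHdeg]
    have hdeg1 : ∀ w : Polynomial ℚ, w ≠ 0 → ¬IsUnit w → 1 ≤ w.natDegree := by
      intro w hwne hwu
      by_contra h
      push_neg at h
      have h0 : w.natDegree = 0 := by omega
      have hr := eq_C_of_natDegree_eq_zero h0
      apply hwu
      rw [hr]
      refine isUnit_C.mpr (isUnit_iff_ne_zero.mpr ?_)
      intro h'
      exact hwne (by rw [hr, h', map_zero])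
    have hu1 : 1 ≤ u.natDegree := hdeg1 u hune hu
    have hv1 : 1 ≤ v.natDegree := hdeg1 v hvne hv
    -- helper: a linear factor gives a root
    have hlin : ∀ w z : Polynomial ℚ, H = w * z → w.natDegree = 1 → False := by
      intro w z hwz hw1
      obtain ⟨m, hm, n, hmn⟩ := natDegree_eq_one.mp hw1
      apply hnoroot (-n / m)
      rw [hwz, eval_mul]
      have hw0 : eval (-n / m) w = 0 := by
        rw [← hmn]
        simp only [eval_add, eval_mul, eval_C, eval_X]
        field_simp
        ring
      rw [hw0, zero_mul]
    have hcases : u.natDegree = 1 ∨ u.natDegree = 2 ∨ u.natDegree = 3 := by omega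
    rcases hcases with hud | hud | hud
    · -- degree 1
      exact hlin u v huv hud
    · -- degree 2: both quadratic
      have hvd : v.natDegree = 2 := by omega
      set l := u.leadingCoeff with hl
      have hlne : l ≠ 0 := leadingCoeff_ne_zero.mpr hune
      have hprod : l * v.leadingCoeff = 1 := by
        have := leadingCoeff_mul u v
        rw [← huv, hHmonic.leadingCoeff] at this
        exact this.symm
      set u' := C l⁻¹ * u with hu'
      set v' := C l * v with hv'
      have hu'v' : H = u' * v' := by
        rw [hu', hv', huv]
        rw [mul_mul_mul_comm, ← C_mul, inv_mul_cancel₀ hlne, C_1, one_mul]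
      have hu'mon : u'.Monic := by
        rw [Monic, hu', leadingCoeff_mul, leadingCoeff_C]
        field_simp
        exact hl.symm
      have hv'mon : v'.Monic := by
        rw [Monic, hv', leadingCoeff_mul, leadingCoeff_C]
        field_simp at hprod ⊢
        linear_combination hprod
      have hu'd : u'.natDegree = 2 := by
        rw [hu', natDegree_C_mul (inv_ne_zero hlne), hud]
      have hv'd : v'.natDegree = 2 := by
        rw [hv', natDegree_C_mul hlne, hvd]
      -- write them in standard form
      have hquad : ∀ g : Polynomial ℚ, g.Monic → g.natDegree = 2 →
          g = X ^ 2 + C (g.coeff 1) * X + C (g.coeff 0) := by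
        intro g hmon hdeg
        ext n
        rcases n with _ | _ | _ | n
        · simp
        · simp
        · have : g.coeff 2 = 1 := by
            have := hmon.leadingCoeff
            rwa [leadingCoeff, hdeg] at this
          simp [this, coeff_X_pow]
        · rw [coeff_eq_zero_of_natDegree_lt (by omega)]
          simp [coeff_X_pow, coeff_C]
      have hueq := hquad u' hu'mon hu'd
      have hveq := hquad v' hv'mon hv'd
      set b := u'.coeff 1
      set c := u'.coeff 0
      set d := v'.coeff 1
      set e := v'.coeff 0
      have hexp : H = X ^ 4 + C (b + d) * X ^ 3 + C (c + e + b * d) * X ^ 2 +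
          C (b * e + c * d) * X + C (c * e) := by
        rw [hu'v', hueq, hveq]
        simp only [C_add, C_mul]
        ring
      have hcoeff : ∀ n : ℕ, H.coeff n = (X ^ 4 + C (b + d) * X ^ 3 + C (c + e + b * d) * X ^ 2 +
          C (b * e + c * d) * X + C (c * e) : Polynomial ℚ).coeff n := fun n => by rw [← hexp]
      have hH3 := hcoeff 3
      have hH2 := hcoeff 2
      have hH1 := hcoeff 1
      have hH0 := hcoeff 0
      simp only [hH, coeff_add, coeff_sub, coeff_C_mul, coeff_X_pow, coeff_X, coeff_C,
        coeff_ofNat_mul] at hH3 hH2 hH1 hH0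
      norm_num at hH3 hH2 hH1 hH0
      obtain ⟨p, hpeq⟩ := aux_alg a b c d e hH3.symm (by linarith [hH2]) hH1.symm (by linarith [hH0]) hns
      exact hp p hpeq
    · -- degree 3: v has degree 1
      exact hlin v u (by rw [huv, mul_comm]) (by omega)
end

section
/- Let a ∈ ℤ and f(x) = (x+a)^2 - a. For any odd prime p such that f mod p is irreducible over 𝔽_p, every element of the post-critical orbit of f mod p is a square in 𝔽_p if and only if -a ≡ b² (mod p) for some b. Consequently, -a is a square in 𝔽_p for all such p exactly when a = -b² for some b ∈ ℤ. -/
open Polynomial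

lemma iter_eval {R : Type*} [CommRing R] (c : R) (i : ℕ) :
    Polynomial.eval (-c) (iter ((X + C c) ^ 2 - C c) i) = -c := by
  induction i with
  | zero => simp [iter]
  | succ n ih => simp [iter, eval_comp, ih]

lemma irred_quad {F : Type*} [Field F] {c : F} (h : ¬ IsSquare c) :
    Irreducible ((X + C c) ^ 2 - C c) := by
  have hf : (X + C c) ^ 2 - C c = X ^ 2 + C (2 * c) * X + C (c ^ 2 - c) := by
    simp only [map_mul, map_sub, map_pow, map_ofNat]
    ring
  rw [hf]
  have hmon : (X ^ 2 + C (2 * c) * X + C (c ^ 2 - c)).Monic := by monicity!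
  have hdeg : (X ^ 2 + C (2 * c) * X + C (c ^ 2 - c)).natDegree = 2 := by compute_degree!
  by_contra hred
  rw [hmon.not_irreducible_iff_exists_add_mul_eq_coeff hdeg] at hred
  obtain ⟨c₁, c₂, h₀, h₁⟩ := hred
  simp only [coeff_add, coeff_C_mul, coeff_X_pow, coeff_C, coeff_X] at h₀ h₁
  norm_num at h₀ h₁
  exact h ⟨c - c₁, by linear_combination c₁ * h₁ - h₀⟩

lemma not_sq_of_irr (a : ℤ) (fz : Polynomial ℤ) (hfz : fz = (X + C a) ^ 2 - C a)
    (hirr : Irreducible (Polynomial.map (Int.castRingHom ℚ) fz)) :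
    ¬ ∃ s : ℤ, s ^ 2 = a := by
  rintro ⟨s, hs⟩
  have key : Polynomial.map (Int.castRingHom ℚ) fz
      = (X + C ((a : ℚ) - s)) * (X + C ((a : ℚ) + s)) := by
    rw [hfz]
    have h : (a : ℚ) = (s : ℚ) ^ 2 := by exact_mod_cast hs.symm
    simp only [Polynomial.map_sub, Polynomial.map_pow, Polynomial.map_add,
      Polynomial.map_X, Polynomial.map_C]
    rw [show ((Int.castRingHom ℚ) a : ℚ) = (a : ℚ) from rfl]
    rw [h]
    simp only [C_sub, C_add, C_pow]
    ring
  rcases hirr.isUnit_or_isUnit key with hu | hu <;>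
  · rw [Polynomial.isUnit_iff_degree_eq_zero, Polynomial.degree_X_add_C] at hu
    exact one_ne_zero hu


lemma exists_good_prime (a : ℤ) (h1 : ¬ ∃ s : ℤ, s ^ 2 = a) (h2 : ¬ ∃ b : ℤ, a = -b ^ 2) :
    ∃ p : ℕ, p.Prime ∧ 2 < p ∧ p % 4 = 1 ∧ jacobiSym a p = -1 := by
  have ha0 : a ≠ 0 := fun h => h1 ⟨0, by simp [h]⟩
  obtain ⟨a₀, b, hab, hsf⟩ := Nat.sq_mul_squarefree a.natAbs
  have ha₀0 : a₀ ≠ 0 := by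
    intro h; rw [h, mul_zero] at hab; exact ha0 (Int.natAbs_eq_zero.mp hab.symm)
  have hb0 : b ≠ 0 := by
    intro h; rw [h] at hab; simp at hab; exact ha0 (Int.natAbs_eq_zero.mp hab.symm)
  set d : ℤ := if 0 ≤ a then (a₀ : ℤ) else -(a₀ : ℤ) with hd_def
  have hd : a = (b : ℤ) ^ 2 * d := by
    by_cases h0 : 0 ≤ a
    · rw [hd_def, if_pos h0]
      have := Int.natAbs_of_nonneg h0
      rw [← this, ← hab]; push_cast; ring
    · rw [hd_def, if_neg h0]
      have : (a.natAbs : ℤ) = -a := Int.ofNat_natAbs_of_nonpos (le_of_not_ge h0)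
      have h2 : (↑(b ^ 2 * a₀) : ℤ) = -a := by rw [hab]; exact this
      push_cast at h2
      linarith
  have hdabs : d.natAbs = a₀ := by
    rw [hd_def]; split_ifs <;> simp
  have hdsf : Squarefree d := Int.squarefree_natAbs.mp (hdabs ▸ hsf)
  have hd1 : d ≠ 1 := by
    intro h; exact h1 ⟨b, by rw [hd, h, mul_one]⟩
  have hdm1 : d ≠ -1 := by
    intro h; exact h2 ⟨b, by rw [hd, h]; ring⟩
  have ha₀2 : 2 ≤ a₀ := by
    rcases Nat.lt_or_ge a₀ 2 with h | h
    · interval_cases a₀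
      · exact absurd rfl ha₀0
      · exfalso
        rw [hd_def] at hd1 hdm1
        split_ifs at hd1 hdm1 <;> omega
    · exact h
  set e := a₀.factorization 2 with he_def
  set m := a₀ / 2 ^ e with hm_def
  have hem : 2 ^ e * m = a₀ := Nat.ordProj_mul_ordCompl_eq_self a₀ 2
  have hm2 : ¬ 2 ∣ m := Nat.not_dvd_ordCompl Nat.prime_two ha₀0
  have hm0 : m ≠ 0 := by intro h; rw [h, mul_zero] at hem; exact ha₀0 hem.symm
  have hmodd : Odd m := Nat.odd_iff.mpr (by omega)
  have he1 : e ≤ 1 := by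
    by_contra h
    have h4 : 2 * 2 ∣ a₀ := by
      have : 2 ^ 2 ∣ 2 ^ e := pow_dvd_pow 2 (by omega)
      rw [← hem]
      exact dvd_mul_of_dvd_left (by simpa [pow_two] using this) m
    exact Nat.prime_two.prime.not_unit (hsf 2 h4)
  have hble : b ≤ a.natAbs := by
    calc b ≤ b ^ 2 := Nat.le_self_pow two_ne_zero b
    _ ≤ b ^ 2 * a₀ := Nat.le_mul_of_pos_right _ (Nat.pos_of_ne_zero ha₀0)
    _ = a.natAbs := hab
  -- reduce to finding p with jacobiSym d p = -1
  suffices hJ : ∃ p : ℕ, p.Prime ∧ 2 < p ∧ p % 4 = 1 ∧ jacobiSym d p = -1 ∧ ¬ p ∣ b by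
    obtain ⟨p, hp, hp2, hp4, hJd, hpb⟩ := hJ
    refine ⟨p, hp, hp2, hp4, ?_⟩
    have hgcd : Int.gcd (b : ℤ) (p : ℕ) = 1 := by
      rw [Int.gcd_natCast_natCast]
      exact ((hp.coprime_iff_not_dvd).mpr hpb).symm
    rw [hd, jacobiSym.mul_left, jacobiSym.sq_one' hgcd, one_mul, hJd]
  by_cases hm1 : m = 1
  · -- d = ±2 case
    have he : e = 1 := by
      interval_cases e
      · rw [hm1] at hem; simp at hem; omega
      · rfl
    have ha₀ : a₀ = 2 := by rw [← hem, hm1, he]; norm_num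
    haveI : NeZero (8 : ℕ) := ⟨by norm_num⟩
    have hunit : IsUnit ((5 : ℕ) : ZMod 8) := by decide
    obtain ⟨p, hpgt, hpp, hpeq⟩ := Nat.forall_exists_prime_gt_and_eq_mod hunit (a.natAbs + 8)
    have hmod : p ≡ 5 [MOD 8] := (ZMod.natCast_eq_natCast_iff _ _ _).mp hpeq
    rw [Nat.ModEq] at hmod
    have hp8 : p % 8 = 5 := by omega
    have hp4 : p % 4 = 1 := by omega
    have hp2 : 2 < p := by have := hpp.two_le; omega
    have hpodd : Odd p := hpp.odd_of_ne_two (by omega)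
    have hpb : ¬ p ∣ b := by
      intro hdvd
      have := Nat.le_of_dvd (Nat.pos_of_ne_zero hb0) hdvd
      omega
    have h2p : jacobiSym 2 p = -1 := by
      rw [jacobiSym.at_two hpodd, ZMod.χ₈_nat_mod_eight, hp8]; decide
    have habs : jacobiSym ((a₀ : ℕ) : ℤ) p = -1 := by
      rw [ha₀]; exact_mod_cast h2p
    have hsign : jacobiSym d p = jacobiSym ((a₀ : ℕ) : ℤ) p := by
      rw [hd_def]; split_ifs
      · rfl
      · rw [jacobiSym.neg _ hpodd, ZMod.χ₄_nat_one_mod_four hp4, one_mul]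
    exact ⟨p, hpp, hp2, hp4, by rw [hsign, habs], hpb⟩
  · -- odd part m > 1
    set q := m.minFac with hq_def
    have hq : q.Prime := Nat.minFac_prime hm1
    have hqd : q ∣ m := Nat.minFac_dvd m
    set m' := m / q with hm'_def
    have hqm : q * m' = m := Nat.mul_div_cancel' hqd
    have hm'0 : m' ≠ 0 := by intro h; rw [h, mul_zero] at hqm; exact hm0 hqm.symm
    have hq2 : q ≠ 2 := by intro h; exact hm2 (h ▸ hqd)
    have hma : m ∣ a₀ := ⟨2 ^ e, by rw [← hem]; ring⟩
    have hqm' : Nat.Coprime q m' := by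
      rw [Nat.Prime.coprime_iff_not_dvd hq]
      intro hdvd
      have hqq : q * q ∣ a₀ := by
        have h1 : q * q ∣ q * m' := mul_dvd_mul_left q hdvd
        rw [hqm] at h1
        exact h1.trans hma
      exact hq.prime.not_unit (hsf q hqq)
    haveI : Fact q.Prime := ⟨hq⟩
    haveI : NeZero q := ⟨hq.ne_zero⟩
    obtain ⟨r, hr⟩ := FiniteField.exists_nonsquare (F := ZMod q)
      (by rw [ZMod.ringChar_zmod_n]; exact hq2)
    have hr0 : r ≠ 0 := fun h => hr (h ▸ ⟨0, by simp⟩)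
    have hrvq : Nat.Coprime r.val q := by
      rw [Nat.coprime_comm, Nat.Prime.coprime_iff_not_dvd hq]
      intro hdvd
      have hlt : r.val < q := ZMod.val_lt r
      have hv0 : r.val = 0 := Nat.eq_zero_of_dvd_of_lt hdvd hlt
      exact hr0 (by rwa [← ZMod.val_eq_zero])
    have h8m : Nat.Coprime 8 m := by
      have h2m : Nat.Coprime 2 m := (Nat.Prime.coprime_iff_not_dvd Nat.prime_two).mpr hm2
      rw [show (8 : ℕ) = 2 ^ 3 by norm_num]
      exact Nat.Coprime.pow_left 3 h2m
    obtain ⟨k₁, hk₁q, hk₁m'⟩ := Nat.chineseRemainder hqm' r.val 1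
    obtain ⟨k, hk8, hkm⟩ := Nat.chineseRemainder h8m 1 k₁
    have hkq : k ≡ r.val [MOD q] := (Nat.ModEq.of_dvd hqd hkm).trans hk₁q
    have hm'm : m' ∣ m := ⟨q, by rw [← hqm]; ring⟩
    have hkm' : k ≡ 1 [MOD m'] := (Nat.ModEq.of_dvd hm'm hkm).trans hk₁m'
    have hck : Nat.Coprime k (8 * m) := by
      refine Nat.Coprime.mul_right ?_ ?_
      · unfold Nat.Coprime
        rw [Nat.ModEq.gcd_eq hk8]
        exact Nat.gcd_one_left 8
      · rw [← hqm]
        refine Nat.Coprime.mul_right ?_ ?_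
        · unfold Nat.Coprime
          rw [Nat.ModEq.gcd_eq hkq]
          exact hrvq
        · unfold Nat.Coprime
          rw [Nat.ModEq.gcd_eq hkm']
          exact Nat.gcd_one_left m'
    haveI : NeZero (8 * m) := ⟨Nat.mul_ne_zero (by norm_num) hm0⟩
    have hunit : IsUnit ((k : ℕ) : ZMod (8 * m)) := (ZMod.isUnit_iff_coprime k (8 * m)).mpr hck
    obtain ⟨p, hpgt, hpp, hpeq⟩ := Nat.forall_exists_prime_gt_and_eq_mod hunit (a.natAbs + 8)
    have hmod : p ≡ k [MOD 8 * m] := (ZMod.natCast_eq_natCast_iff _ _ _).mp hpeq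
    have hp8 : p % 8 = 1 := by
      have h := (Nat.ModEq.of_dvd (dvd_mul_right 8 m) hmod).trans hk8
      rw [Nat.ModEq] at h; omega
    have hp4 : p % 4 = 1 := by omega
    have hp2 : 2 < p := by have := hpp.two_le; omega
    have hpodd : Odd p := hpp.odd_of_ne_two (by omega)
    have hpb : ¬ p ∣ b := by
      intro hdvd
      have := Nat.le_of_dvd (Nat.pos_of_ne_zero hb0) hdvd
      omega
    have hpq : p ≡ r.val [MOD q] := (Nat.ModEq.of_dvd (hqd.mul_left 8) hmod).trans hkq
    have hpm' : p ≡ 1 [MOD m'] := (Nat.ModEq.of_dvd (hm'm.mul_left 8) hmod).trans hkm'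
    have hcast : ((p : ℕ) : ZMod q) = r := by
      rw [(ZMod.natCast_eq_natCast_iff p r.val q).mpr hpq]
      exact ZMod.natCast_rightInverse r
    have hJpq : jacobiSym (p : ℤ) q = -1 := by
      rw [← jacobiSym.legendreSym.to_jacobiSym]
      exact (legendreSym.eq_neg_one_iff q).mpr (by rw [Int.cast_natCast, hcast]; exact hr)
    have hJpm' : jacobiSym (p : ℤ) m' = 1 := by
      have hmodint : (p : ℤ) % (m' : ℤ) = (1 : ℤ) % (m' : ℤ) := by exact_mod_cast hpm'
      rw [jacobiSym.mod_left' hmodint, jacobiSym.one_left]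
    have hJm : jacobiSym ((m : ℕ) : ℤ) p = -1 := by
      calc jacobiSym ((m : ℕ) : ℤ) p
          = jacobiSym ((p : ℕ) : ℤ) m := jacobiSym.quadratic_reciprocity_one_mod_four' hmodd hp4
        _ = jacobiSym ((p : ℕ) : ℤ) (q * m') := by rw [hqm]
        _ = jacobiSym (p : ℤ) q * jacobiSym (p : ℤ) m' := jacobiSym.mul_right' _ hq.ne_zero hm'0
        _ = -1 := by rw [hJpq, hJpm', mul_one]
    have hχ8 : jacobiSym 2 p = 1 := by
      rw [jacobiSym.at_two hpodd, ZMod.χ₈_nat_mod_eight, hp8]; decide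
    have habs : jacobiSym ((a₀ : ℕ) : ℤ) p = -1 := by
      have hcast2 : ((a₀ : ℕ) : ℤ) = (2 : ℤ) ^ e * ((m : ℕ) : ℤ) := by rw [← hem]; push_cast; ring
      rw [hcast2, jacobiSym.mul_left, jacobiSym.pow_left, hχ8, one_pow, one_mul, hJm]
    have hsign : jacobiSym d p = jacobiSym ((a₀ : ℕ) : ℤ) p := by
      rw [hd_def]; split_ifs
      · rfl
      · rw [jacobiSym.neg _ hpodd, ZMod.χ₄_nat_one_mod_four hp4, one_mul]
    exact ⟨p, hpp, hp2, hp4, by rw [hsign, habs], hpb⟩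

/-- For `f(x) = (x+a)^2 - a` irreducible over ℚ: for each odd prime `p` with `f mod p`
irreducible, every element of the post-critical orbit of `f mod p` (orbit of the critical
point `-a`) is a square iff `-a` is a square mod `p`; and `-a` is a square mod all such
`p` exactly when `a = -b^2` for some integer `b`. -/
theorem stmt13 (a : ℤ) (fz : Polynomial ℤ) (hfz : fz = (X + C a) ^ 2 - C a)
    (hirr : Irreducible (Polynomial.map (Int.castRingHom ℚ) fz)) :
    (∀ p : ℕ, p.Prime → Odd p →
        Irreducible (Polynomial.map (Int.castRingHom (ZMod p)) fz) →
        ((∀ i : ℕ, 1 ≤ i →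
            IsSquare (Polynomial.eval (-(a : ZMod p))
              (iter (Polynomial.map (Int.castRingHom (ZMod p)) fz) i))) ↔
          ∃ b : ZMod p, b ^ 2 = -(a : ZMod p))) ∧
    ((∀ p : ℕ, p.Prime → Odd p →
        Irreducible (Polynomial.map (Int.castRingHom (ZMod p)) fz) →
        IsSquare (-(a : ZMod p))) ↔ ∃ b : ℤ, a = -b ^ 2) := by
  have hmap : ∀ p : ℕ, Polynomial.map (Int.castRingHom (ZMod p)) fz
      = (X + C ((a : ZMod p))) ^ 2 - C ((a : ZMod p)) := by
    intro p
    rw [hfz]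
    simp [Polynomial.map_sub, Polynomial.map_pow, Polynomial.map_add]
  constructor
  · intro p _ _ _
    have hkey : ∀ i : ℕ, Polynomial.eval (-(a : ZMod p))
        (iter (Polynomial.map (Int.castRingHom (ZMod p)) fz) i) = -(a : ZMod p) := by
      intro i; rw [hmap p]; exact iter_eval _ i
    constructor
    · intro h
      obtain ⟨r, hr⟩ := h 1 le_rfl
      rw [hkey 1] at hr
      exact ⟨r, by rw [hr]; ring⟩
    · rintro ⟨b, hb⟩ i _
      rw [hkey i]
      exact ⟨b, by rw [← hb]; ring⟩
  · constructor
    · intro h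
      by_contra h2
      obtain ⟨p, hpp, hp2, hp4, hJ⟩ :=
        exists_good_prime a (not_sq_of_irr a fz hfz hirr) h2
      haveI : Fact p.Prime := ⟨hpp⟩
      have hpodd : Odd p := hpp.odd_of_ne_two (by omega)
      have hnsq : ¬ IsSquare ((a : ℤ) : ZMod p) :=
        ZMod.nonsquare_of_jacobiSym_eq_neg_one hJ
      have hirrp : Irreducible (Polynomial.map (Int.castRingHom (ZMod p)) fz) := by
        rw [hmap p]
        exact irred_quad hnsq
      have hJneg : jacobiSym (-a) p = -1 := by
        rw [jacobiSym.neg _ hpodd, ZMod.χ₄_nat_one_mod_four hp4, one_mul, hJ]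
      have hnsqneg : ¬ IsSquare ((-a : ℤ) : ZMod p) :=
        ZMod.nonsquare_of_jacobiSym_eq_neg_one hJneg
      rw [Int.cast_neg] at hnsqneg
      exact hnsqneg (h p hpp hpodd hirrp)
    · rintro ⟨b, hb⟩ p _ _ _
      refine ⟨(b : ZMod p), ?_⟩
      rw [hb]
      push_cast
      ring
end

section
/- Let a, b ∈ ℤ with a = -b² and f(x) = (x - b²)² + b². Then for every odd prime p, f mod p does not have all elements of its post-critical orbit non-squares in 𝔽_p; in particular, for every prime p there exists n ≤ 2 such that f^(n+1) mod p is reducible, i.e., f^3 mod p is reducible for every prime p. -/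
open Polynomial

lemma not_irred_of_mul {K : Type*} [Field K] (P g h : Polynomial K)
    (hP : P = g * h) (hg : 0 < g.degree) (hh : 0 < h.degree) : ¬ Irreducible P := by
  intro H
  rcases H.isUnit_or_isUnit hP with h1 | h1
  · rw [Polynomial.isUnit_iff_degree_eq_zero] at h1; simp [h1] at hg
  · rw [Polynomial.isUnit_iff_degree_eq_zero] at h1; simp [h1] at hh

lemma degA {K : Type*} [Field K] (c : K) (k : ℕ) :
    (((X : Polynomial K) - C c) ^ k).degree = k := by
  rw [degree_pow, degree_X_sub_C]
  simp

lemma deg4a {K : Type*} [Field K] (c v : K) :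
    (((X : Polynomial K) - C c) ^ 4 + C v).degree = 4 := by
  rw [degree_add_eq_left_of_degree_lt (by
    rw [degA]; exact lt_of_le_of_lt degree_C_le (by decide)), degA]
  rfl

lemma deg4b {K : Type*} [Field K] (c u v : K) :
    (((X : Polynomial K) - C c) ^ 4 + C u * ((X : Polynomial K) - C c) ^ 2 + C v).degree = 4 := by
  rw [add_assoc, degree_add_eq_left_of_degree_lt (by
    rw [degA]
    apply lt_of_le_of_lt (degree_add_le _ _)
    apply max_lt
    · apply lt_of_le_of_lt (degree_mul_le _ _)
      calc (C u).degree + (((X : Polynomial K) - C c) ^ 2).degree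
          ≤ 0 + 2 := by
            apply add_le_add degree_C_le
            exact le_of_eq (by rw [degA]; rfl)
        _ < 4 := by decide
    · exact lt_of_le_of_lt degree_C_le (by decide)), degA]
  rfl

lemma not_irred_oct {K : Type*} [Field K] (b c : K)
    (h : IsSquare (-1 : K) ∨ IsSquare (2 * b) ∨ IsSquare (-(2 * b)) ∨ b = 0) :
    ¬ Irreducible (((X : Polynomial K) - C c) ^ 8 + C (b ^ 2)) := by
  rcases h with ⟨i, hi⟩ | ⟨s, hs⟩ | ⟨t, ht⟩ | hb
  · apply not_irred_of_mul _ ((X - C c) ^ 4 + C (i * b)) ((X - C c) ^ 4 + C (-(i * b)))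
    · have h1 : (C i : Polynomial K) * C i = -1 := by
        rw [← map_mul, ← hi, map_neg, map_one]
      have h2 : (C (i * b) : Polynomial K) = C i * C b := map_mul _ _ _
      have h3 : (C (-(i * b)) : Polynomial K) = -(C i * C b) := by
        rw [map_neg, h2]
      have h4 : (C (b ^ 2) : Polynomial K) = C b ^ 2 := map_pow _ _ _
      rw [h2, h3, h4]
      linear_combination ((C b : Polynomial K) ^ 2) * h1
    · rw [deg4a]; decide
    · rw [deg4a]; decide
  · apply not_irred_of_mul _ ((X - C c) ^ 4 + C s * (X - C c) ^ 2 + C b)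
      ((X - C c) ^ 4 + C (-s) * (X - C c) ^ 2 + C b)
    · have h1 : (C s : Polynomial K) * C s = 2 * C b := by
        rw [← map_mul, ← hs, map_mul, map_ofNat]
      have h4 : (C (b ^ 2) : Polynomial K) = C b ^ 2 := map_pow _ _ _
      have h5 : (C (-s) : Polynomial K) = -(C s) := map_neg _ _
      rw [h4, h5]
      linear_combination (((X : Polynomial K) - C c) ^ 4) * h1
    · rw [deg4b]; decide
    · rw [deg4b]; decide
  · apply not_irred_of_mul _ ((X - C c) ^ 4 + C t * (X - C c) ^ 2 + C (-b))
      ((X - C c) ^ 4 + C (-t) * (X - C c) ^ 2 + C (-b))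
    · have h1 : (C t : Polynomial K) * C t = -(2 * C b) := by
        rw [← map_mul, ← ht, map_neg, map_mul, map_ofNat]
      have h4 : (C (b ^ 2) : Polynomial K) = C b ^ 2 := map_pow _ _ _
      have h5 : (C (-t) : Polynomial K) = -(C t) := map_neg _ _
      have h6 : (C (-b) : Polynomial K) = -(C b) := map_neg _ _
      rw [h4, h5, h6]
      linear_combination (((X : Polynomial K) - C c) ^ 4) * h1
    · rw [deg4b]; decide
    · rw [deg4b]; decide
  · apply not_irred_of_mul _ ((X - C c) ^ 4) ((X - C c) ^ 4)
    · rw [hb]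
      simp [← pow_add]
    · rw [degA]; decide
    · rw [degA]; decide

/-- For `f(x) = (x - b^2)^2 + b^2`: modulo every odd prime, some element of the
post-critical orbit (the orbit of the critical point `b^2`) is a square, and `f^3`
is reducible modulo every prime. -/
theorem stmt14 (b : ℤ) (f : Polynomial ℤ) (hf : f = (X - C (b ^ 2)) ^ 2 + C (b ^ 2)) :
    (∀ p : ℕ, p.Prime → Odd p →
        ∃ i : ℕ, 1 ≤ i ∧
          IsSquare (Polynomial.eval ((b : ZMod p) ^ 2)
            (iter (Polynomial.map (Int.castRingHom (ZMod p)) f) i))) ∧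
    (∀ p : ℕ, p.Prime →
        ¬ Irreducible (iter (Polynomial.map (Int.castRingHom (ZMod p)) f) 3)) := by
  have hmap : ∀ p : ℕ, Polynomial.map (Int.castRingHom (ZMod p)) f
      = (X - C ((b : ZMod p) ^ 2)) ^ 2 + C ((b : ZMod p) ^ 2) := by
    intro p
    have hc : ((Int.castRingHom (ZMod p)) (b ^ 2)) = ((b : ZMod p) ^ 2) := by
      rw [eq_intCast]; push_cast; ring
    rw [hf]
    simp only [Polynomial.map_add, Polynomial.map_pow, Polynomial.map_sub, Polynomial.map_X,
      Polynomial.map_C, hc]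
  constructor
  · intro p hp hodd
    refine ⟨1, le_refl 1, ?_⟩
    rw [show (1 : ℕ) = 0 + 1 from rfl]
    rw [iter, iter, comp_X, hmap]
    simp only [eval_add, eval_pow, eval_sub, eval_X, eval_C, sub_self]
    norm_num
    exact ⟨(b : ZMod p), (pow_two _)⟩
  · intro p hp
    haveI : Fact p.Prime := ⟨hp⟩
    have hiter : iter (Polynomial.map (Int.castRingHom (ZMod p)) f) 3
        = (X - C ((b : ZMod p) ^ 2)) ^ 8 + C (((b : ZMod p)) ^ 2) := by
      rw [show (3 : ℕ) = 0 + 1 + 1 + 1 from rfl]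
      rw [iter, iter, iter, iter, comp_X, hmap]
      simp only [add_comp, sub_comp, pow_comp, X_comp, C_comp]
      ring
    rw [hiter]
    apply not_irred_oct
    by_cases hb : (b : ZMod p) = 0
    · exact Or.inr (Or.inr (Or.inr hb))
    by_cases h1 : IsSquare (-1 : ZMod p)
    · exact Or.inl h1
    by_cases h2 : IsSquare (2 * (b : ZMod p))
    · exact Or.inr (Or.inl h2)
    refine Or.inr (Or.inr (Or.inl ?_))
    have h3 : p % 4 = 3 := by
      have := (ZMod.exists_sq_eq_neg_one_iff (p := p)).not
      exact not_not.mp (this.mp h1)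
    have hp2 : p ≠ 2 := by
      intro h
      rw [h] at h3
      norm_num at h3
    have h2ne : (2 : ZMod p) ≠ 0 := by
      intro h
      have h' : ((2 : ℕ) : ZMod p) = 0 := by exact_mod_cast h
      rw [ZMod.natCast_eq_zero_iff] at h'
      exact hp2 ((Nat.prime_dvd_prime_iff_eq hp Nat.prime_two).mp h')
    have hne : 2 * (b : ZMod p) ≠ 0 := mul_ne_zero h2ne hb
    have hneg : (-1 : ZMod p) ≠ 0 := by
      simp
    have c1 : quadraticChar (ZMod p) (-1) = -1 :=
      quadraticChar_neg_one_iff_not_isSquare.mpr h1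
    have c2 : quadraticChar (ZMod p) (2 * b) = -1 :=
      quadraticChar_neg_one_iff_not_isSquare.mpr h2
    have c3 : quadraticChar (ZMod p) (-(2 * b)) = 1 := by
      rw [show (-(2 * (b : ZMod p))) = (-1) * (2 * b) by ring, map_mul, c1, c2]
      ring
    exact (quadraticChar_one_iff_isSquare (neg_ne_zero.mpr hne)).mp c3
end

section
/- Let b ∈ ℤ and f(x) = (x + b²)² - b² - 1 be irreducible over ℚ. Then f^n is irreducible over ℚ for all n ≥ 1, and for every prime p, f^3 mod p is reducible over 𝔽_p. -/
open Polynomial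

lemma iter_succ_right {R : Type*} [CommRing R] (f : Polynomial R) (n : ℕ) :
    iter f (n + 1) = (iter f n).comp f := by
  induction n with
  | zero => simp [iter]
  | succ n ih =>
    show f.comp (iter f (n+1)) = (f.comp (iter f n)).comp f
    rw [ih, Polynomial.comp_assoc]

lemma iter_monic_natDegree {K : Type*} [Field K] (f : Polynomial K) (hm : f.Monic)
    (hd : f.natDegree = 2) (n : ℕ) : (iter f n).Monic ∧ (iter f n).natDegree = 2 ^ n := by
  induction n with
  | zero => exact ⟨monic_X, by simp [iter]⟩
  | succ n ih =>
    have h1 : (iter f (n+1)) = f.comp (iter f n) := rfl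
    have hdeg : (f.comp (iter f n)).natDegree = 2 ^ (n+1) := by
      rw [natDegree_comp, hd, ih.2]; ring
    exact ⟨by rw [h1]; exact hm.comp ih.1 (by rw [ih.2]; positivity), by rw [h1, hdeg]⟩

/-- Shift by a constant, as a ring equivalence of polynomial rings. -/
noncomputable def shiftE {K : Type*} [Field K] (a : K) : Polynomial K ≃+* Polynomial K where
  toFun p := p.comp (X + C a)
  invFun p := p.comp (X - C a)
  left_inv p := by show (p.comp _).comp _ = p; rw [Polynomial.comp_assoc]; simp
  right_inv p := by show (p.comp _).comp _ = p; rw [Polynomial.comp_assoc]; simp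
  map_add' p q := add_comp
  map_mul' p q := mul_comp p q _

lemma irreducible_shift {K : Type*} [Field K] (a : K) (p : Polynomial K) (hp : Irreducible p) :
    Irreducible (p.comp (X + C a)) :=
  (MulEquiv.irreducible_iff (shiftE a).toMulEquiv).mpr hp

/-- `X ↦ -X`, as a ring equivalence of polynomial rings. -/
noncomputable def negE {K : Type*} [Field K] : Polynomial K ≃+* Polynomial K where
  toFun p := p.comp (-X)
  invFun p := p.comp (-X)
  left_inv p := by show (p.comp _).comp _ = p; rw [Polynomial.comp_assoc]; simp
  right_inv p := by show (p.comp _).comp _ = p; rw [Polynomial.comp_assoc]; simp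
  map_add' p q := add_comp
  map_mul' p q := mul_comp p q _

lemma irreducible_neg {K : Type*} [Field K] (p : Polynomial K) (hp : Irreducible p) :
    Irreducible (p.comp (-X)) :=
  (MulEquiv.irreducible_iff (negE (K := K)).toMulEquiv).mpr hp

lemma coeff_comp_neg {K : Type*} [Field K] (p : Polynomial K) (n : ℕ) :
    (p.comp (-X)).coeff n = (-1) ^ n * p.coeff n := by
  induction p using Polynomial.induction_on' with
  | add p q hp hq => simp [add_comp, hp, hq]; ring
  | monomial k a =>
    have h1 : ((monomial k a) : Polynomial K).comp (-X) = C ((-1) ^ k * a) * X ^ k := by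
      rw [← C_mul_X_pow_eq_monomial, mul_comp, C_comp, pow_comp, X_comp, map_mul, map_pow,
        map_neg, map_one]
      ring
    rw [h1, coeff_C_mul, coeff_X_pow, coeff_monomial]
    rcases eq_or_ne n k with rfl | hnk
    · simp
    · simp [hnk, Ne.symm hnk]

lemma even_is_expand (p : Polynomial ℚ) (hp : p.comp (-X) = p) :
    ∃ g : Polynomial ℚ, p = Polynomial.expand ℚ 2 g := by
  refine ⟨p.contract 2, ?_⟩
  ext n
  rw [coeff_expand (by norm_num : 0 < 2)]
  split_ifs with h
  · rw [coeff_contract (by norm_num : (2:ℕ) ≠ 0), Nat.div_mul_cancel h]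
  · -- n odd, so coeff p n = 0
    have hodd : Odd n := Nat.odd_iff.mpr (by omega)
    have h2 := coeff_comp_neg p n
    rw [hp, hodd.neg_one_pow] at h2
    linarith

theorem lemA (h : Polynomial ℚ) (hm : h.Monic) (hi : Irreducible h)
    (hneg : (-1 : ℚ) ^ h.natDegree * h.coeff 0 < 0) :
    Irreducible (Polynomial.expand ℚ 2 h) := by
  have hd1 : 1 ≤ h.natDegree := by
    rcases Nat.eq_zero_or_pos h.natDegree with h0 | h1
    · exact absurd (hm.natDegree_eq_zero.mp h0 ▸ isUnit_one) hi.not_isUnit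
    · exact h1
  have h00 : h.coeff 0 ≠ 0 := by intro e; rw [e] at hneg; simp at hneg
  set P := Polynomial.expand ℚ 2 h with hPdef
  have hPcomp : P.comp (-X) = P := by
    rw [hPdef, expand_eq_comp_X_pow, Polynomial.comp_assoc]
    congr 1
    simp [pow_comp, neg_pow]
  have hPm : P.Monic := hm.expand (by norm_num)
  have hP0 : P ≠ 0 := hPm.ne_zero
  have hP00 : P.coeff 0 = h.coeff 0 := by
    rw [hPdef, coeff_expand (by norm_num : 0 < 2)]
    norm_num
  have hPdeg : P.natDegree = h.natDegree * 2 := by rw [hPdef, natDegree_expand]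
  clear_value P
  by_contra hred
  have hPnu : ¬ IsUnit P := by
    intro hu
    have := natDegree_eq_zero_of_isUnit hu
    omega
  obtain ⟨r0, hr0i, hr0d⟩ := WfDvdMonoid.exists_irreducible_factor hPnu hP0
  have hr00 : r0 ≠ 0 := hr0i.ne_zero
  have hulc : IsUnit (C (r0.leadingCoeff)⁻¹) :=
    isUnit_C.mpr (isUnit_iff_ne_zero.mpr (inv_ne_zero (leadingCoeff_ne_zero.mpr hr00)))
  set r := r0 * C (r0.leadingCoeff)⁻¹ with hrdef
  have hrm : r.Monic := monic_mul_leadingCoeff_inv hr00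
  have hassoc : Associated r0 r := ⟨hulc.unit, by rw [hrdef, IsUnit.unit_spec]⟩
  have hri : Irreducible r := hassoc.irreducible hr0i
  have hrd : r ∣ P := (hassoc.symm.dvd).trans hr0d
  have hrne : r ≠ 0 := hri.ne_zero
  have hrdeg1 : 1 ≤ r.natDegree := by
    rcases Nat.eq_zero_or_pos r.natDegree with h0 | h1
    · exact absurd (hrm.natDegree_eq_zero.mp h0 ▸ isUnit_one) hri.not_isUnit
    · exact h1
  clear_value r
  clear hrdef hulc hr0i hr0d hr00
  set rs := C ((-1 : ℚ) ^ r.natDegree) * r.comp (-X) with hrsdef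
  have hCne : ((-1 : ℚ) ^ r.natDegree) ≠ 0 := pow_ne_zero _ (by norm_num)
  have hrcompdeg : (r.comp (-X)).natDegree = r.natDegree := by
    rw [natDegree_comp]; simp
  have hrsdeg : rs.natDegree = r.natDegree := by
    rw [hrsdef, natDegree_C_mul hCne, hrcompdeg]
  have hrsm : rs.Monic := by
    have hlc : (r.comp (-X)).leadingCoeff = (-1 : ℚ) ^ r.natDegree := by
      rw [leadingCoeff_comp (by simp : natDegree (-X : Polynomial ℚ) ≠ 0)]
      simp [hrm.leadingCoeff]
    have : rs.leadingCoeff = 1 := by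
      rw [hrsdef, leadingCoeff_mul, leadingCoeff_C, hlc, ← mul_pow]
      norm_num
    exact this
  have hrsne : rs ≠ 0 := hrsm.ne_zero
  have hassoc2 : Associated (r.comp (-X)) rs :=
    ⟨(isUnit_C.mpr (isUnit_iff_ne_zero.mpr hCne)).unit, by
      rw [IsUnit.unit_spec, hrsdef]; ring⟩
  have hrsi : Irreducible rs := hassoc2.irreducible (irreducible_neg r hri)
  have hrsd : rs ∣ P := by
    obtain ⟨t, ht⟩ := hrd
    have hcompdvd : r.comp (-X) ∣ P := by
      refine ⟨t.comp (-X), ?_⟩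
      conv_lhs => rw [← hPcomp]
      rw [ht, mul_comp]
    exact hassoc2.symm.dvd.trans hcompdvd
  have hrcc : (r.comp (-X)).comp (-X) = r := by
    rw [Polynomial.comp_assoc]; simp
  have hrs0 : rs.coeff 0 = (-1 : ℚ) ^ r.natDegree * r.coeff 0 := by
    rw [hrsdef, coeff_C_mul, coeff_comp_neg, pow_zero, one_mul]
  have hrscomp : rs.comp (-X) = C ((-1 : ℚ) ^ r.natDegree) * r := by
    rw [hrsdef, mul_comp, C_comp, hrcc]
  clear_value rs
  by_cases hrr : rs = r
  · -- self-dual case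
    rcases Nat.even_or_odd r.natDegree with he | ho
    · have h1 : r.comp (-X) = r := by
        have e := hrr
        rw [hrsdef, he.neg_one_pow, map_one, one_mul] at e
        exact e
      obtain ⟨g, hg⟩ := even_is_expand r h1
      obtain ⟨t, ht⟩ := hrd
      have htm : t.Monic := hrm.of_mul_monic_left (ht ▸ hPm)
      have hteven : t.comp (-X) = t := by
        have e1 : r.comp (-X) * t.comp (-X) = r * t := by
          rw [← mul_comp, ← ht, hPcomp, ht]
        rw [h1] at e1
        exact mul_left_cancel₀ hrne e1
      obtain ⟨m, hmq⟩ := even_is_expand t hteven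
      have hgm : h = g * m := by
        apply Polynomial.expand_injective (by norm_num : 0 < 2)
        rw [map_mul, ← hg, ← hmq, ← hPdef]
        exact ht
      rcases hi.isUnit_or_isUnit hgm with hu | hu
      · have : r.natDegree = 0 := by
          simp [hg, natDegree_expand, natDegree_eq_zero_of_isUnit hu]
        omega
      · have hmm : m.Monic := (monic_expand_iff (by norm_num : 0 < 2)).mp (hmq ▸ htm)
        have hm1 : m = 1 := hmm.natDegree_eq_zero.mp (natDegree_eq_zero_of_isUnit hu)
        have htt : t = 1 := by rw [hm1, map_one] at hmq; exact hmq
        have hPr : P = r := by rw [ht, htt, mul_one]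
        exact hred (hPr ▸ hri)
    · -- odd self-dual: r(0) = 0
      have h0 : r.coeff 0 = 0 := by
        have e : rs.coeff 0 = r.coeff 0 := by rw [hrr]
        rw [hrs0, ho.neg_one_pow] at e
        linarith
      obtain ⟨t, ht⟩ := hrd
      have : P.coeff 0 = 0 := by rw [ht, mul_coeff_zero, h0, zero_mul]
      rw [hP00] at this
      exact h00 this
  · -- r and rs distinct irreducibles
    have hnd : ¬ r ∣ rs := by
      intro hdvd
      obtain ⟨k, hk⟩ := hdvd
      have hk0 : k ≠ 0 := by intro e; rw [e, mul_zero] at hk; exact hrsne hk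
      have hdadd : r.natDegree + k.natDegree = r.natDegree := by
        rw [← natDegree_mul hrne hk0, ← hk, hrsdeg]
      have hkdeg : k.natDegree = 0 := by omega
      have hkm : k.Monic := hrm.of_mul_monic_left (hk ▸ hrsm)
      have hk1 : k = 1 := hkm.natDegree_eq_zero.mp hkdeg
      rw [hk1, mul_one] at hk
      exact hrr hk
    have hcop : IsCoprime r rs := (hri.coprime_iff_not_dvd).mpr hnd
    have hwd : r * rs ∣ P := hcop.mul_dvd hrd hrsd
    set w := r * rs with hwdef
    have hwm : w.Monic := hrm.mul hrsm
    have hwne : w ≠ 0 := hwm.ne_zero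
    have hweven : w.comp (-X) = w := by
      rw [hwdef, mul_comp, hrscomp, hrsdef]
      ring
    have hwdeg : w.natDegree = r.natDegree + r.natDegree := by
      rw [hwdef, natDegree_mul hrne hrsne, hrsdeg]
    have hw0 : w.coeff 0 = (-1 : ℚ) ^ r.natDegree * (r.coeff 0) ^ 2 := by
      rw [hwdef, mul_coeff_zero, hrs0]; ring
    clear_value w
    obtain ⟨g, hg⟩ := even_is_expand w hweven
    obtain ⟨t, ht⟩ := hwd
    have htm : t.Monic := hwm.of_mul_monic_left (ht ▸ hPm)
    have hteven : t.comp (-X) = t := by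
      have e1 : w.comp (-X) * t.comp (-X) = w * t := by
        rw [← mul_comp, ← ht, hPcomp, ht]
      rw [hweven] at e1
      exact mul_left_cancel₀ hwne e1
    obtain ⟨m, hmq⟩ := even_is_expand t hteven
    have hgm : h = g * m := by
      apply Polynomial.expand_injective (by norm_num : 0 < 2)
      rw [map_mul, ← hg, ← hmq, ← hPdef]
      exact ht
    rcases hi.isUnit_or_isUnit hgm with hu | hu
    · have : w.natDegree = 0 := by
        simp [hg, natDegree_expand, natDegree_eq_zero_of_isUnit hu]
      omega
    · have hmm : m.Monic := (monic_expand_iff (by norm_num : 0 < 2)).mp (hmq ▸ htm)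
      have hm1 : m = 1 := hmm.natDegree_eq_zero.mp (natDegree_eq_zero_of_isUnit hu)
      have htt : t = 1 := by rw [hm1, map_one] at hmq; exact hmq
      have hPw : P = w := by rw [ht, htt, mul_one]
      have hdeg : r.natDegree = h.natDegree := by
        rw [hPw] at hPdeg
        omega
      have e0 : h.coeff 0 = (-1 : ℚ) ^ h.natDegree * (r.coeff 0) ^ 2 := by
        rw [← hP00, hPw, hw0, hdeg]
      rw [e0] at hneg
      have h1 : ((-1 : ℚ) ^ h.natDegree) * ((-1 : ℚ) ^ h.natDegree) = 1 := by
        rw [← mul_pow]; norm_num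
      nlinarith [sq_nonneg (r.coeff 0)]

theorem part1 (b : ℤ) (f : Polynomial ℤ)
    (hf : f = (X + C (b ^ 2)) ^ 2 - C (b ^ 2) - 1)
    (hirr : Irreducible (Polynomial.map (Int.castRingHom ℚ) f)) :
    ∀ n : ℕ, 1 ≤ n → Irreducible (iter (Polynomial.map (Int.castRingHom ℚ) f) n) := by
  set β : ℚ := (b : ℚ) ^ 2 with hβ
  set fQ := Polynomial.map (Int.castRingHom ℚ) f with hfQdef
  have hfQ : fQ = (X + C β) ^ 2 - C β - 1 := by
    have hcast : C ((Int.castRingHom ℚ) (b ^ 2)) = (C β : Polynomial ℚ) := by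
      congr 1
    rw [hfQdef, hf]
    simp only [Polynomial.map_sub, Polynomial.map_pow, Polynomial.map_add,
      Polynomial.map_one, Polynomial.map_X, Polynomial.map_C, hcast]
  have hb : b ≠ 0 := by
    intro hb0
    apply hirr.not_isUnit
    exfalso
    have hβ0 : β = 0 := by rw [hβ, hb0]; norm_num
    have : fQ = (X - C 1) * (X + C 1) := by
      rw [hfQ, hβ0]
      simp only [map_zero, map_one]
      ring
    rcases hirr.isUnit_or_isUnit (hfQdef ▸ this) with hu | hu
    · have := natDegree_eq_zero_of_isUnit hu
      rw [natDegree_X_sub_C] at this; omega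
    · have := natDegree_eq_zero_of_isUnit hu
      rw [natDegree_X_add_C] at this; omega
  have hβpos : 0 < β := by positivity
  have hfQm : fQ.Monic := by rw [hfQ]; monicity!
  have hfQd : fQ.natDegree = 2 := by rw [hfQ]; compute_degree!
  have horb : ∀ n : ℕ, 1 ≤ n →
      (iter fQ n).eval (-β - 1) = -β ∨ (iter fQ n).eval (-β - 1) = -β - 1 := by
    intro n hn
    induction n, hn using Nat.le_induction with
    | base =>
      left
      have h1 : iter fQ 1 = fQ := by show fQ.comp (iter fQ 0) = fQ; show fQ.comp X = fQ; simp
      rw [h1, hfQ]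
      simp
      try ring
    | succ n hn ih =>
      have h1 : iter fQ (n + 1) = fQ.comp (iter fQ n) := rfl
      rw [h1, eval_comp]
      rcases ih with e | e
      · right
        rw [e, hfQ]
        simp
        try ring
      · left
        rw [e, hfQ]
        simp
        try ring
  intro n hn
  induction n, hn using Nat.le_induction with
  | base =>
    have h1 : iter fQ 1 = fQ := by show fQ.comp (iter fQ 0) = fQ; show fQ.comp X = fQ; simp
    rw [h1]; exact hfQdef ▸ hirr
  | succ n hn ih =>
    obtain ⟨hgm, hgdeg⟩ := iter_monic_natDegree fQ hfQm hfQd n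
    set g := iter fQ n with hgdef
    -- h := g.comp (X - C (β+1))
    set h : Polynomial ℚ := g.comp (X - C (β + 1)) with hhdef
    have hshift : h = g.comp (X + C (-(β + 1))) := by
      rw [hhdef, sub_eq_add_neg, ← C_neg]
    have hhm : h.Monic := hgm.comp (monic_X_sub_C _) (by rw [natDegree_X_sub_C]; omega)
    have hhi : Irreducible h := hshift ▸ irreducible_shift _ g ih
    have hhdeg : h.natDegree = 2 ^ n := by
      rw [hhdef, natDegree_comp, natDegree_X_sub_C, hgdeg, mul_one]
    have hh0 : h.coeff 0 = g.eval (-β - 1) := by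
      have he : eval 0 (X - C (β + 1)) = -β - 1 := by simp; ring
      rw [coeff_zero_eq_eval_zero, hhdef, eval_comp, he]
    have hhneg : (-1 : ℚ) ^ h.natDegree * h.coeff 0 < 0 := by
      have heven : Even (2 ^ n) := by
        refine (Nat.even_pow).mpr ⟨even_two, by omega⟩
      rw [hhdeg, heven.neg_one_pow, one_mul, hh0]
      rcases horb n hn with e | e <;> rw [e] <;> linarith
    have hexp : Irreducible (Polynomial.expand ℚ 2 h) := lemA h hhm hhi hhneg
    have hfinal : Irreducible ((Polynomial.expand ℚ 2 h).comp (X + C β)) :=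
      irreducible_shift β _ hexp
    have hiterstep : iter fQ (n + 1) = (Polynomial.expand ℚ 2 h).comp (X + C β) := by
      rw [iter_succ_right, ← hgdef, expand_eq_comp_X_pow, hhdef,
        Polynomial.comp_assoc, Polynomial.comp_assoc]
      congr 1
      rw [hfQ]
      simp only [sub_comp, pow_comp, X_comp, C_comp]
      simp only [map_add, map_one]
      ring
    rw [hiterstep]
    exact hfinal

lemma allsq2 : ∀ x : ZMod 2, IsSquare x := by decide

lemma sq_dichotomy {p : ℕ} [Fact p.Prime] {u v : ZMod p} (h : ¬ IsSquare (u * v)) :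
    IsSquare u ∨ IsSquare v := by
  by_contra hc
  push_neg at hc
  have hu := quadraticChar_neg_one_iff_not_isSquare.mpr hc.1
  have hv := quadraticChar_neg_one_iff_not_isSquare.mpr hc.2
  have hu0 : u ≠ 0 := by intro e; exact hc.1 (e ▸ ⟨0, by ring⟩)
  have hv0 : v ≠ 0 := by intro e; exact hc.2 (e ▸ ⟨0, by ring⟩)
  have h1 : quadraticChar (ZMod p) (u * v) = 1 := by rw [map_mul, hu, hv]; ring
  exact h ((quadraticChar_one_iff_isSquare (mul_ne_zero hu0 hv0)).mp h1)

lemma nonsq_mul {p : ℕ} [Fact p.Prime] {u v : ZMod p} (hu : ¬ IsSquare u)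
    (hv : ¬ IsSquare v) : IsSquare (u * v) := by
  have hu' := quadraticChar_neg_one_iff_not_isSquare.mpr hu
  have hv' := quadraticChar_neg_one_iff_not_isSquare.mpr hv
  have hu0 : u ≠ 0 := by intro e; exact hu (e ▸ ⟨0, by ring⟩)
  have hv0 : v ≠ 0 := by intro e; exact hv (e ▸ ⟨0, by ring⟩)
  have h1 : quadraticChar (ZMod p) (u * v) = 1 := by rw [map_mul, hu', hv']; ring
  exact (quadraticChar_one_iff_isSquare (mul_ne_zero hu0 hv0)).mp h1

lemma not_irred_of_factor {K : Type*} [Field K] (P A B : Polynomial K) (hP : P = A * B)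
    (hA : A.natDegree ≠ 0) (hB : B.natDegree ≠ 0) : ¬ Irreducible P := by
  intro hI
  rcases hI.isUnit_or_isUnit hP with hu | hu
  · exact hA (natDegree_eq_zero_of_isUnit hu)
  · exact hB (natDegree_eq_zero_of_isUnit hu)

theorem part2 (b : ℤ) (f : Polynomial ℤ)
    (hf : f = (X + C (b ^ 2)) ^ 2 - C (b ^ 2) - 1) :
    ∀ p : ℕ, p.Prime →
      ¬ Irreducible (iter (Polynomial.map (Int.castRingHom (ZMod p)) f) 3) := by
  intro p hp
  haveI : Fact p.Prime := ⟨hp⟩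
  set β : ZMod p := ((b : ZMod p)) ^ 2 with hβ
  set F := Polynomial.map (Int.castRingHom (ZMod p)) f with hFdef
  have hF : F = (X + C β) ^ 2 - C β - 1 := by
    have hcast : C ((Int.castRingHom (ZMod p)) (b ^ 2)) = (C β : Polynomial (ZMod p)) := by
      congr 1 <;> simp [map_pow, hβ]
    rw [hFdef, hf]
    simp only [Polynomial.map_sub, Polynomial.map_pow, Polynomial.map_add,
      Polynomial.map_one, Polynomial.map_X, Polynomial.map_C, hcast]
  have hFm : F.Monic := by rw [hF]; monicity!
  have hFd : F.natDegree = 2 := by rw [hF]; compute_degree!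
  have hi2 := iter_monic_natDegree F hFm hFd 2
  have h2 : iter F 2 = (X + C β) ^ 4 - 2 * (X + C β) ^ 2 - C β := by
    have e1 : iter F 1 = F := by
      show F.comp (iter F 0) = F
      show F.comp X = F
      simp
    show F.comp (iter F 1) = _
    rw [e1]
    conv_lhs => rw [hF]
    simp only [sub_comp, add_comp, pow_comp, X_comp, C_comp, one_comp]
    ring
  have h3 : iter F 3 = ((X + C β) ^ 4 - 2 * (X + C β) ^ 2) ^ 2 - C β - 1 := by
    show F.comp (iter F 2) = _
    rw [h2, hF]
    simp only [sub_comp, add_comp, pow_comp, X_comp, C_comp, one_comp, mul_comp, ofNat_comp]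
    ring
  by_cases hsq : IsSquare (β + 1)
  · -- F has a root
    obtain ⟨w, hw⟩ := hsq
    set r : ZMod p := w - β with hr
    have hroot : IsRoot F r := by
      rw [hF]
      simp only [IsRoot, eval_sub, eval_add, eval_pow, eval_X, eval_C, eval_one]
      rw [hr]
      linear_combination -hw
    have hfac : F = (X - C r) * (F /ₘ (X - C r)) := (mul_divByMonic_eq_iff_isRoot.mpr hroot).symm
    set Q := F /ₘ (X - C r) with hQ
    have hQne : Q ≠ 0 := by
      intro e
      rw [e, mul_zero] at hfac
      exact hFm.ne_zero hfac
    have hQdeg : Q.natDegree = 1 := by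
      have hd := natDegree_mul (X_sub_C_ne_zero r) hQne
      rw [← hfac, hFd, natDegree_X_sub_C] at hd
      omega
    have hkey : iter F 3 = (iter F 2 - C r) * Q.comp (iter F 2) := by
      have e3 : iter F 3 = F.comp (iter F 2) := rfl
      rw [e3]
      generalize iter F 2 = g2
      rw [hfac, mul_comp, sub_comp, X_comp, C_comp]
    apply not_irred_of_factor _ _ _ hkey
    · rw [natDegree_sub_C, hi2.2]
      norm_num
    · rw [natDegree_comp, hQdeg, hi2.2]
      norm_num
  · -- β + 1 is a nonsquare
    have hp2 : p ≠ 2 := by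
      rintro rfl
      exact hsq (allsq2 _)
    have h2ne : (2 : ZMod p) ≠ 0 := by
      intro e
      have : ((2 : ℕ) : ZMod p) = 0 := by exact_mod_cast e
      rw [ZMod.natCast_eq_zero_iff] at this
      exact hp2 ((Nat.prime_dvd_prime_iff_eq hp Nat.prime_two).mp this)
    have hb0 : (b : ZMod p) ≠ 0 := by
      intro e
      exact hsq ⟨1, by rw [hβ, e]; ring⟩
    have hc0 : β + 1 ≠ 0 := by
      intro e
      exact hsq (e ▸ ⟨0, by ring⟩)
    by_cases hm1 : IsSquare (-1 : ZMod p)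
    · -- -1 is a square: f∘f factors
      obtain ⟨i, hi⟩ := hm1
      have hstep : ∃ s t : ZMod p, t * t = -β ∧ s * s = 2 + 2 * t := by
        have hprod : ¬ IsSquare ((2 + 2 * (i * (b : ZMod p))) * (2 - 2 * (i * (b : ZMod p)))) := by
          intro ⟨y, hy⟩
          apply hsq
          refine ⟨y / 2, ?_⟩
          have he : y * y = (2 * 2) * (β + 1) := by
            rw [hβ]
            linear_combination -hy + (4 * (b : ZMod p) ^ 2) * hi
          field_simp
          linear_combination -he
        rcases sq_dichotomy hprod with ⟨s, hs⟩ | ⟨s, hs⟩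
        · exact ⟨s, i * (b : ZMod p), by rw [hβ]; linear_combination (-(b : ZMod p) ^ 2) * hi,
            hs.symm⟩
        · exact ⟨s, -(i * (b : ZMod p)), by rw [hβ]; linear_combination (-(b : ZMod p) ^ 2) * hi,
            by linear_combination -hs⟩
      obtain ⟨s, t, ht, hs⟩ := hstep
      have htC : (C t : Polynomial (ZMod p)) * C t = -(C β) := by
        rw [← C_mul, ← C_neg]
        exact congrArg C ht
      have hsC : (C s : Polynomial (ZMod p)) * C s = 2 + 2 * C t := by
        rw [← C_mul]
        have := congrArg (C : ZMod p → Polynomial (ZMod p)) hs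
        rw [map_add, map_mul] at this
        simp only [map_mul, map_ofNat] at this; rw [C_mul]; exact this
      set G1 : Polynomial (ZMod p) := (X + C β) ^ 2 + C s * (X + C β) + C t with hG1
      set G2 : Polynomial (ZMod p) := (X + C β) ^ 2 - C s * (X + C β) + C t with hG2
      have key2 : iter F 2 = G1 * G2 := by
        rw [h2, hG1, hG2]
        linear_combination ((X + C β) ^ 2) * hsC - htC
      have hkey : iter F 3 = G1.comp F * G2.comp F := by
        rw [show (3 : ℕ) = 2 + 1 from rfl, iter_succ_right, key2, mul_comp]
      apply not_irred_of_factor _ _ _ hkey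
      · rw [natDegree_comp, hFd]
        have : G1.natDegree = 2 := by rw [hG1]; compute_degree!
        rw [this]; norm_num
      · rw [natDegree_comp, hFd]
        have : G2.natDegree = 2 := by rw [hG2]; compute_degree!
        rw [this]; norm_num
    · -- -1 is not a square: the octic factors into two quartics
      have hnegsq : IsSquare (-(β + 1)) := by
        have h' := nonsq_mul hm1 hsq
        rwa [neg_one_mul] at h'
      obtain ⟨t0, ht0'⟩ := hnegsq
      have ht0 : t0 * t0 = -(β + 1) := ht0'.symm
      have hd1 : ¬ IsSquare ((2 * t0) * (-(2 * t0))) := by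
        rintro ⟨y, hy⟩
        apply hsq
        refine ⟨y / 2, ?_⟩
        have he : y * y = (2 * 2) * (β + 1) := by linear_combination -hy - 4 * ht0
        field_simp
        linear_combination -he
      obtain ⟨D, τ, hD, hτ⟩ : ∃ D τ : ZMod p, D * D = -(β + 1) ∧ τ * τ = 2 * D := by
        rcases sq_dichotomy hd1 with ⟨τ, hτ⟩ | ⟨τ, hτ⟩
        · exact ⟨t0, τ, ht0, hτ.symm⟩
        · exact ⟨-t0, τ, by linear_combination ht0, by linear_combination -hτ⟩
      have hDne : D ≠ 0 := by
        intro e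
        rw [e] at hD
        exact hc0 (by linear_combination hD)
      have hd2 : ¬ IsSquare ((2*(τ*τ) + 4*τ + 4) * (2*(τ*τ) - 4*τ + 4)) := by
        rintro ⟨y, hy⟩
        apply hm1
        refine ⟨y / (4 * (b : ZMod p)), ?_⟩
        have he : y * y = -((4*(b:ZMod p)) * (4*(b:ZMod p))) := by
          rw [hβ] at hD
          linear_combination -hy + (4*(τ*τ) + 8*D) * hτ + 16 * hD
        have h4b : (4 : ZMod p) * (b:ZMod p) ≠ 0 := by
          refine mul_ne_zero ?_ hb0
          intro e4
          exact h2ne (by rcases mul_eq_zero.mp (show (2:ZMod p)*2 = 0 by linear_combination e4)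
            with h | h <;> exact h)
        rw [div_mul_div_comm, eq_div_iff (mul_ne_zero h4b h4b)]
        linear_combination -he
      obtain ⟨τ', ν, hτ', hν⟩ : ∃ τ' ν : ZMod p, τ' * τ' = 2 * D ∧
          ν * ν = 2*(τ'*τ') + 4*τ' + 4 := by
        rcases sq_dichotomy hd2 with ⟨ν, hν⟩ | ⟨ν, hν⟩
        · exact ⟨τ, ν, hτ, hν.symm⟩
        · exact ⟨-τ, ν, by linear_combination hτ, by linear_combination -hν⟩
      have hτ'ne : τ' ≠ 0 := by
        intro e
        rw [e] at hτ'
        rcases mul_eq_zero.mp (show (2:ZMod p) * D = 0 by linear_combination -hτ') with h | h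
        · exact h2ne h
        · exact hDne h
      have hd3 : ¬ IsSquare ((2*(2 + τ' + ν)) * (2*(2 + τ' - ν))) := by
        rintro ⟨y, hy⟩
        apply hm1
        refine ⟨y / (2 * τ'), ?_⟩
        have he : y * y = -((2*τ') * (2*τ')) := by linear_combination -hy - 4 * hν
        have h2τ : (2 : ZMod p) * τ' ≠ 0 := mul_ne_zero h2ne hτ'ne
        field_simp
        linear_combination -he
      obtain ⟨ν', A, hν', hA⟩ : ∃ ν' A : ZMod p, ν' * ν' = 2*(τ'*τ') + 4*τ' + 4 ∧
          A * A = 4 + 2*τ' + 2*ν' := by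
        rcases sq_dichotomy hd3 with ⟨A, hA⟩ | ⟨A, hA⟩
        · exact ⟨ν, A, hν, by linear_combination -hA⟩
        · exact ⟨-ν, A, by linear_combination hν, by linear_combination -hA⟩
      have hAne : A ≠ 0 := by
        intro e
        rw [e] at hA
        have e2 : (2:ZMod p) * (2 * D) = 0 := by
          rw [← hτ']
          linear_combination (-2)*hν' + (τ' + 2 - ν')*hA
        rcases mul_eq_zero.mp e2 with h | h
        · exact h2ne h
        rcases mul_eq_zero.mp h with h | h
        · exact h2ne h
        · exact hDne h
      obtain ⟨B, hB⟩ : ∃ B : ZMod p, B = τ' + ν' := ⟨_, rfl⟩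
      obtain ⟨Cc, hCc⟩ : ∃ Cq : ZMod p, Cq = (B*B + 2*D - 4) / (2*A) := ⟨_, rfl⟩
      have h2A : (2:ZMod p) * A ≠ 0 := mul_ne_zero h2ne hAne
      have hC1 : 2*A*Cc = B*B + 2*D - 4 := by
        rw [hCc]
        field_simp
      have s1 : B*B + 2*D - 4 = 2*τ'*(2*τ' + ν' + 2) := by
        linear_combination (B + τ' + ν') * hB + hν' - hτ'
      have s2 : (2*τ' + ν' + 2)*(2*τ' + ν' + 2) = 2*(2 + τ' + ν')*(τ' + ν') := by
        linear_combination -hν'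
      have hmain : (B*B + 2*D - 4)*(B*B + 2*D - 4) = 8*(A*A)*B*D := by
        linear_combination (B*B + 2*D - 4 + 2*τ'*(2*τ' + ν' + 2)) * s1 + (4*τ'^2) * s2
          + (-8*B*D) * hA + (-16*D*(2 + τ' + ν')) * hB + (8*(τ' + ν')*(2 + τ' + ν')) * hτ'
      have hC2 : Cc*Cc = 2*B*D := by
        have e2 : ((2*A)*(2*A))*(Cc*Cc) = ((2*A)*(2*A))*(2*B*D) := by
          linear_combination (2*A*Cc + (B*B + 2*D - 4)) * hC1 + hmain
        exact mul_left_cancel₀ (mul_ne_zero h2A h2A) e2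
      -- lift the relations to polynomial constants
      have e1s : 2*B = A*A - 4 := by linear_combination 2*hB - hA
      have e1C : (2 : Polynomial (ZMod p)) * C B = C A * C A - 4 := by
        have h' := congrArg (C : ZMod p → Polynomial (ZMod p)) e1s
        simp only [map_sub, map_mul, map_ofNat] at h'; exact h'
      have e2C : 2 * C A * C Cc = C B * C B + 2 * C D - 4 := by
        have h' := congrArg (C : ZMod p → Polynomial (ZMod p)) hC1
        simp only [map_add, map_sub, map_mul, map_ofNat] at h'; exact h'
      have e3C : C Cc * C Cc = 2 * C B * C D := by
        have h' := congrArg (C : ZMod p → Polynomial (ZMod p)) hC2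
        simp only [map_mul, map_ofNat] at h'; exact h'
      have e4s : D*D = -β - 1 := by linear_combination hD
      have e4C : (C D : Polynomial (ZMod p)) * C D = -(C β) - 1 := by
        have h' := congrArg (C : ZMod p → Polynomial (ZMod p)) e4s
        simpa using h'
      set G1 : Polynomial (ZMod p) := (X + C β)^4 + C A*(X + C β)^3 + C B*(X + C β)^2
        + C Cc*(X + C β) + C D with hG1
      set G2 : Polynomial (ZMod p) := (X + C β)^4 - C A*(X + C β)^3 + C B*(X + C β)^2
        - C Cc*(X + C β) + C D with hG2
      have hkey : iter F 3 = G1 * G2 := by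
        rw [h3, hG1, hG2]
        linear_combination (-((X + C β)^6)) * e1C + ((X + C β)^4) * e2C
          + ((X + C β)^2) * e3C - e4C
      apply not_irred_of_factor _ _ _ hkey
      · have hg : G1.natDegree = 4 := by rw [hG1]; compute_degree!
        rw [hg]; norm_num
      · have hg : G2.natDegree = 4 := by rw [hG2]; compute_degree!
        rw [hg]; norm_num

/-- For `f(x) = (x + b^2)^2 - b^2 - 1` irreducible over ℚ: all iterates are irreducible
over ℚ, and `f^3` is reducible modulo every prime. -/
theorem stmt16 (b : ℤ) (f : Polynomial ℤ)
    (hf : f = (X + C (b ^ 2)) ^ 2 - C (b ^ 2) - 1)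
    (hirr : Irreducible (Polynomial.map (Int.castRingHom ℚ) f)) :
    (∀ n : ℕ, 1 ≤ n → Irreducible (iter (Polynomial.map (Int.castRingHom ℚ) f) n)) ∧
    (∀ p : ℕ, p.Prime →
        ¬ Irreducible (iter (Polynomial.map (Int.castRingHom (ZMod p)) f) 3)) :=
  ⟨part1 b f hf hirr, part2 b f hf⟩
end

section
/- Let K be a field of characteristic ≠ 2 and f(x) ∈ K[x] a monic PCF quadratic polynomial with tail size t_f = 1 and orbit size o_f. Then f^n is irreducible over K for all n ≥ 1 if and only if f^(o_f) is irreducible over K. -/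
open Polynomial

open IntermediateField Module

section DEC
variable {K : Type*} [Field K]

lemma dec0 (P : K[X]) : ∃ w₁ w₂ : K[X], P = w₁.comp (X ^ 2) + X * w₂.comp (X ^ 2) := by
  generalize h : P.natDegree = n
  induction n using Nat.strong_induction_on generalizing P with
  | _ n ih =>
    rcases eq_or_ne n 0 with rfl | hn
    · refine ⟨C (P.coeff 0), 0, ?_⟩
      simp [C_comp]
      exact eq_C_of_natDegree_eq_zero h
    · have hP0 : P ≠ 0 := by
        intro h0; rw [h0] at h; simp at h; omega
      have hd : (P.divX).natDegree < n := by
        have := Polynomial.natDegree_divX_eq_natDegree_tsub_one (p := P)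
        omega
      obtain ⟨w₁, w₂, hw⟩ := ih _ hd P.divX rfl
      refine ⟨C (P.coeff 0) + X * w₂, w₁, ?_⟩
      conv_lhs => rw [← Polynomial.X_mul_divX_add P]
      rw [hw]
      simp only [add_comp, mul_comp, X_comp, C_comp]
      ring

lemma dec1 (c : K) (P : K[X]) : ∃ w₁ w₂ : K[X],
    P = w₁.comp ((X - C c) ^ 2) + (X - C c) * w₂.comp ((X - C c) ^ 2) := by
  obtain ⟨w₁, w₂, hw⟩ := dec0 (P.comp (X + C c))
  refine ⟨w₁, w₂, ?_⟩
  have hP : P = (P.comp (X + C c)).comp (X - C c) := by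
    rw [comp_assoc]; simp
  rw [hP, hw]
  simp [add_comp, mul_comp, X_comp, pow_comp, comp_assoc]

end DEC

section PartI
variable {K : Type*} [Field K]

lemma iter_add (f : K[X]) (a b : ℕ) : iter f (a + b) = (iter f a).comp (iter f b) := by
  induction a with
  | zero => simp [iter]
  | succ a ih =>
      have : a + 1 + b = (a + b) + 1 := by ring
      rw [this]
      simp only [iter, ih, comp_assoc]

lemma natDegree_iter (f : K[X]) (hdeg : f.natDegree = 2) (n : ℕ) :
    (iter f n).natDegree = 2 ^ n := by
  induction n with
  | zero => simp [iter]
  | succ n ih => simp [iter, natDegree_comp, hdeg, ih, pow_succ, mul_comm]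

lemma monic_iter (f : K[X]) (hm : f.Monic) (hdeg : f.natDegree = 2) (n : ℕ) :
    (iter f n).Monic := by
  induction n with
  | zero => simpa [iter] using monic_X
  | succ n ih =>
      have h0 : (iter f n).natDegree ≠ 0 := by
        rw [natDegree_iter f hdeg]; positivity
      exact hm.comp ih h0

lemma aeval_iter {A : Type*} [CommRing A] [Algebra K A] (f : K[X]) (n : ℕ) (x : A) :
    aeval x (iter f n) = (fun y => aeval y f)^[n] x := by
  induction n generalizing x with
  | zero => simp [iter]
  | succ n ih => simp [iter, aeval_comp, ih, Function.iterate_succ_apply', ih]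

lemma irreducible_of_comp {p q : K[X]} (h : Irreducible (p.comp q))
    (hq : q.natDegree ≠ 0) : Irreducible p := by
  constructor
  · intro hu
    obtain ⟨r, hr, rfl⟩ := Polynomial.isUnit_iff.mp hu
    exact h.not_isUnit (by simpa [C_comp] using (Polynomial.isUnit_C.mpr hr))
  · intro u v huv
    have : p.comp q = (u.comp q) * (v.comp q) := by rw [huv, mul_comp]
    rcases h.isUnit_or_isUnit this with h1 | h1
    · left
      have hdeg0 : u.natDegree = 0 := by
        have := natDegree_eq_zero_of_isUnit h1
        rw [natDegree_comp] at this
        exact Nat.mul_eq_zero.mp this |>.resolve_right hq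
      obtain ⟨a, rfl⟩ := natDegree_eq_zero.mp hdeg0
      simpa [C_comp] using h1
    · right
      have hdeg0 : v.natDegree = 0 := by
        have := natDegree_eq_zero_of_isUnit h1
        rw [natDegree_comp] at this
        exact Nat.mul_eq_zero.mp this |>.resolve_right hq
      obtain ⟨a, rfl⟩ := natDegree_eq_zero.mp hdeg0
      simpa [C_comp] using h1

/-- normal form of a monic quadratic with critical point `c` -/
lemma f_normal_form (f : K[X]) (hm : f.Monic) (hdeg : f.natDegree = 2)
    (c : K) (hc : (derivative f).eval c = 0) :
    f = (X - C c) ^ 2 + C (f.eval c) := by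
  have hexp : (X - C c) ^ 2 = X ^ 2 - C (2 * c) * X + C (c ^ 2) := by
    simp only [C_mul, C_pow, map_ofNat]; ring
  set g : K[X] := f - (X - C c) ^ 2 with hg
  have hdg : g.natDegree ≤ 1 := by
    rw [natDegree_le_iff_coeff_eq_zero]
    intro N hN
    have h1 : f.coeff N - ((X - C c) ^ 2).coeff N = 0 := by
      rcases Nat.lt_or_ge N 2 with h | h
      · omega
      rcases Nat.eq_or_lt_of_le h with rfl | h2
      · have : f.coeff 2 = 1 := by
          have := hm.coeff_natDegree; rwa [hdeg] at this
        rw [this, hexp]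
        simp only [coeff_sub, coeff_add, coeff_X_pow, coeff_C_mul, coeff_X, coeff_C]
        norm_num
      · have hf : f.coeff N = 0 := coeff_eq_zero_of_natDegree_lt (by omega)
        have hx : ((X - C c) ^ 2).coeff N = 0 := by
          apply coeff_eq_zero_of_natDegree_lt
          have : ((X - C c) ^ 2).natDegree = 2 := by
            simp [natDegree_pow, natDegree_X_sub_C]
          omega
        rw [hf, hx, sub_zero]
    simpa [hg, coeff_sub] using h1
  have hrepr := eq_X_add_C_of_natDegree_le_one hdg
  have hder : g.coeff 1 = 0 := by
    have h2 : (derivative g).eval c = 0 := by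
      rw [hg, derivative_sub]
      simp [derivative_pow, hc]
    have h3 : (derivative g).eval c = g.coeff 1 := by
      conv_lhs => rw [hrepr]
      simp
    rw [← h3, h2]
  have hev : g.coeff 0 = f.eval c := by
    have h5 : g.eval c = f.eval c := by rw [hg]; simp
    rw [hrepr] at h5
    simpa [hder] using h5
  have hfin : g = C (f.eval c) := by rw [hrepr, hder, hev]; simp
  rw [hg] at hfin
  rw [← hfin]
  ring

end PartI

section Helpers
variable {K Ω : Type*} [Field K] [Field Ω] [Algebra K Ω]

lemma aeval_mem (E : IntermediateField K Ω) {x : Ω} (hx : x ∈ E) (p : K[X]) :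
    aeval x p ∈ E := by
  have h0 : x = algebraMap E Ω (⟨x, hx⟩ : E) := rfl
  rw [h0, Polynomial.aeval_algebraMap_apply]
  exact (aeval (⟨x, hx⟩ : E) p).2

lemma finrank_mono_IF {E F : IntermediateField K Ω} (h : E ≤ F) [FiniteDimensional K F] :
    finrank K E ≤ finrank K F :=
  LinearMap.finrank_le_finrank_of_injective (f := (IntermediateField.inclusion h).toLinearMap)
    (IntermediateField.inclusion h).injective

end Helpers


section KeyStep
variable {K : Type*} [Field K]

set_option maxHeartbeats 1000000 in
lemma key_step (f : K[X]) (hm : f.Monic) (hdeg : f.natDegree = 2) (c : K)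
    (hnf : f = (X - C c) ^ 2 + C (f.eval c))
    (s n : ℕ) (hs : 1 ≤ s) (hn : s + 1 ≤ n)
    (hper : ∀ i, 2 ≤ i → (fun x => f.eval x)^[i + s] c = (fun x => f.eval x)^[i] c)
    (hao : (fun x => f.eval x)^[s + 1] c = 2 * c - f.eval c)
    (hirr : ∀ m, 1 ≤ m → m ≤ n → Irreducible (iter f m)) :
    Irreducible (iter f (n + 1)) := by
  classical
  by_contra hred
  set Ω := AlgebraicClosure K with hΩ
  set g : K → K := fun x => f.eval x with hg
  set aK : ℕ → K := fun i => g^[i] c with haK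
  -- basic identities in K
  have haK1 : aK 1 = f.eval c := by rw [haK]; simp [hg]
  have haK_succ : ∀ m, aK (m + 1) = f.eval (aK m) := by
    intro m; rw [haK]; simp only [hg]; rw [Function.iterate_succ_apply']
  have hevK : ∀ x : K, f.eval x = (x - c) ^ 2 + f.eval c := by
    intro x
    conv_lhs => rw [hnf]
    simp [eval_pow]
  have hsqK : ∀ m, (aK m - c) ^ 2 = aK (m + 1) - aK 1 := by
    intro m
    rw [haK_succ m, haK1, hevK (aK m)]
    ring
  -- multiples of the period
  have hmult : ∀ q i, 2 ≤ i → aK (i + q * s) = aK i := by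
    intro q
    induction q with
    | zero => intro i _; simp
    | succ q ihq =>
        intro i hi
        have h2 := hper (i + q * s) (by omega)
        show g^[i + (q + 1) * s] c = g^[i] c
        rw [show i + (q + 1) * s = i + q * s + s from by ring, h2]
        exact ihq i hi
  -- the ambient algebraically closed field
  have hchain : True := trivial
  -- map to Ω
  set c' : Ω := algebraMap K Ω c with hc'
  set aa : ℕ → Ω := fun i => algebraMap K Ω (aK i) with haa
  have hsq : ∀ m, (aa m - c') ^ 2 = aa (m + 1) - aa 1 := by
    intro m
    rw [haa, hc']
    simp only [← map_sub, ← map_pow]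
    rw [hsqK m]
  have hao' : aa (s + 1) = 2 * c' - aa 1 := by
    show algebraMap K Ω (aK (s + 1)) = 2 * algebraMap K Ω c - algebraMap K Ω (aK 1)
    rw [show aK (s + 1) = 2 * c - aK 1 from by rw [haK1]; exact hao]
    rw [map_sub, map_mul, map_ofNat]
  -- the evaluation identity in Ω
  have hevalf : ∀ x : Ω, aeval x f = (x - c') ^ 2 + aa 1 := by
    intro x
    conv_lhs => rw [hnf]
    show _ = (x - algebraMap K Ω c) ^ 2 + algebraMap K Ω (aK 1)
    rw [haK1]
    simp only [map_add, map_pow, map_sub, aeval_X, aeval_C]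
  -- root of iter f (n+1)
  have hdegit : ∀ j : ℕ, (iter f j).natDegree = 2 ^ j := natDegree_iter f hdeg
  obtain ⟨θ, hθ⟩ : ∃ θ : Ω, aeval θ (iter f (n + 1)) = 0 := by
    have h1 : ((iter f (n+1)).map (algebraMap K Ω)).degree ≠ 0 := by
      rw [degree_map]
      have h2 : (iter f (n+1)).natDegree ≠ 0 := by rw [hdegit]; positivity
      intro h3
      exact h2 (natDegree_eq_zero_iff_degree_le_zero.mpr (le_of_eq h3))
    obtain ⟨x, hx⟩ := IsAlgClosed.exists_root _ h1
    exact ⟨x, by rwa [IsRoot, eval_map, ← aeval_def] at hx⟩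
  -- the chain
  set F : Ω → Ω := fun x => aeval x f with hF
  set th : ℕ → Ω := fun j => F^[n + 1 - j] θ with hth
  have hroot : ∀ j, j ≤ n + 1 → aeval (th j) (iter f j) = 0 := by
    intro j hj
    rw [hth]
    simp only
    rw [aeval_iter, ← Function.iterate_add_apply, show j + (n + 1 - j) = n + 1 from by omega,
      ← aeval_iter, hθ]
  have hth_succ : ∀ j, j ≤ n → th j = F (th (j + 1)) := by
    intro j hj
    rw [hth]
    simp only
    rw [show n + 1 - j = (n + 1 - (j+1)) + 1 from by omega, Function.iterate_succ_apply']
  have hsqth : ∀ j, j ≤ n → (th (j + 1) - c') ^ 2 = th j - aa 1 := by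
    intro j hj
    rw [hth_succ j hj, hF]
    simp only
    rw [hevalf]
    ring
  -- fields
  set L : ℕ → IntermediateField K Ω := fun j => K⟮th j⟯ with hL
  have hint : ∀ x : Ω, IsIntegral K x := fun x => Algebra.IsIntegral.isIntegral x
  have hirr' : ∀ m, m ≤ n → Irreducible (iter f m) := by
    intro m hmn
    rcases Nat.eq_zero_or_pos m with rfl | h
    · simpa [iter] using irreducible_X (R := K)
    · exact hirr m h hmn
  have hminp : ∀ j, j ≤ n → minpoly K (th j) = iter f j := by
    intro j hj
    exact (minpoly.eq_of_irreducible_of_monic (hirr' j hj) (hroot j (by omega))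
      (monic_iter f hm hdeg j)).symm
  have hfinL : ∀ j, j ≤ n → finrank K (L j) = 2 ^ j := by
    intro j hj
    rw [hL]
    simp only
    rw [adjoin.finrank (hint (th j)), hminp j hj, hdegit]
  have hfd : ∀ j, FiniteDimensional K (L j) := fun j => adjoin.finiteDimensional (hint (th j))
  have hthmem : ∀ j, th j ∈ L j := fun j => mem_adjoin_simple_self K (th j)
  have hmemL : ∀ j, j ≤ n → th j ∈ L (j + 1) := by
    intro j hj
    rw [hth_succ j hj]
    exact aeval_mem _ (hthmem (j + 1)) f
  have hLle : ∀ j, j ≤ n → L j ≤ L (j + 1) := fun j hj => adjoin_simple_le_iff.mpr (hmemL j hj)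
  have haamem : ∀ i (E : IntermediateField K Ω), aa i ∈ E := fun i E => E.algebraMap_mem _
  have hc'mem : ∀ E : IntermediateField K Ω, c' ∈ E := fun E => E.algebraMap_mem _
  have htwo : ∀ E : IntermediateField K Ω, (2 : Ω) ∈ E := by
    intro E
    rw [show (2 : Ω) = algebraMap K Ω 2 from by rw [map_ofNat]]
    exact E.algebraMap_mem 2
  -- th k is not in L (k-1)
  have hnotmem : ∀ k, 1 ≤ k → k ≤ n → th k ∉ L (k - 1) := by
    intro k hk1 hkn hmem
    have hle : L k ≤ L (k - 1) := adjoin_simple_le_iff.mpr hmem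
    haveI := hfd (k - 1)
    have hmono := finrank_mono_IF hle
    rw [hfinL k hkn, hfinL (k - 1) (by omega)] at hmono
    have hp2 : (2 : ℕ) ^ k = 2 * 2 ^ (k - 1) := by
      rw [← pow_succ']
      congr 1
      omega
    have hp1 : (1 : ℕ) ≤ 2 ^ (k - 1) := Nat.one_le_two_pow
    omega
  -- uniqueness of representation
  have huniq : ∀ k, 1 ≤ k → k ≤ n → ∀ A B A' B' : Ω, A ∈ L (k - 1) → B ∈ L (k - 1) →
      A' ∈ L (k - 1) → B' ∈ L (k - 1) →
      A + (th k - c') * B = A' + (th k - c') * B' → A = A' ∧ B = B' := by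
    intro k hk1 hkn A B A' B' hA hB hA' hB' heq
    by_cases hBB : B = B'
    · subst hBB
      exact ⟨by linear_combination heq, rfl⟩
    · exfalso
      have ht : th k = (A' - A) / (B - B') + c' := by
        have hne : B - B' ≠ 0 := sub_ne_zero.mpr hBB
        rw [div_add' _ _ _ hne, eq_div_iff hne]
        linear_combination heq
      refine hnotmem k hk1 hkn ?_
      rw [ht]
      exact add_mem (div_mem (sub_mem hA' hA) (sub_mem hB hB')) (hc'mem _)
  -- decomposition along the quadratic subextension
  have hdecomp : ∀ k, 1 ≤ k → k ≤ n + 1 → ∀ γ : Ω, γ ∈ L k →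
      ∃ U V : Ω, U ∈ L (k - 1) ∧ V ∈ L (k - 1) ∧ γ = U + (th k - c') * V := by
    intro k hk1 hkn1 γ hγ
    have hsub : γ ∈ Algebra.adjoin K {th k} := by
      have h1 : (K⟮th k⟯).toSubalgebra = Algebra.adjoin K {th k} :=
        adjoin_simple_toSubalgebra_of_isAlgebraic (hint (th k)).isAlgebraic
      have h2 : γ ∈ (K⟮th k⟯).toSubalgebra := hγ
      rwa [h1] at h2
    rw [Algebra.adjoin_singleton_eq_range_aeval] at hsub
    obtain ⟨P, hP⟩ := hsub
    obtain ⟨w₁, w₂, hw⟩ := dec1 c P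
    have hkey : (th k - c') ^ 2 = th (k - 1) - aa 1 := by
      have := hsqth (k - 1) (by omega)
      rwa [show k - 1 + 1 = k from by omega] at this
    have hXc : ∀ w : K[X], aeval (th k) (w.comp ((X - C c) ^ 2)) = aeval (th (k - 1) - aa 1) w := by
      intro w
      rw [aeval_comp]
      congr 1
      rw [map_pow, map_sub, aeval_X, aeval_C, ← hc', hkey]
    refine ⟨aeval (th (k - 1) - aa 1) w₁, aeval (th (k - 1) - aa 1) w₂,
      aeval_mem _ (sub_mem (hthmem (k - 1)) (haamem 1 _)) w₁,
      aeval_mem _ (sub_mem (hthmem (k - 1)) (haamem 1 _)) w₂, ?_⟩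
    have hPγ : γ = aeval (th k) (w₁.comp ((X - C c) ^ 2))
        + aeval (th k) ((X - C c) * w₂.comp ((X - C c) ^ 2)) := by
      rw [← map_add, ← hw]
      exact hP.symm
    rw [hPγ, hXc w₁, map_mul, hXc w₂, map_sub, aeval_X, aeval_C, ← hc']
  -- the top step : th (n+1) lies in L n
  have hθtop : th (n + 1) ∈ L n := by
    by_contra hnm
    have hEmem : th n ∈ K⟮th (n + 1)⟯ := by
      rw [hth_succ n le_rfl]
      exact aeval_mem _ (mem_adjoin_simple_self K (th (n + 1))) f
    have hup : L n ≤ K⟮th (n + 1)⟯ := adjoin_simple_le_iff.mpr hEmem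
    haveI : FiniteDimensional K K⟮th (n + 1)⟯ := adjoin.finiteDimensional (hint _)
    have hdlt : finrank K K⟮th (n + 1)⟯ < 2 ^ (n + 1) := by
      rw [adjoin.finrank (hint _)]
      obtain ⟨q, hq⟩ := minpoly.dvd K (th (n + 1)) (hroot (n + 1) le_rfl)
      have hμne : minpoly K (th (n + 1)) ≠ 0 := minpoly.ne_zero (hint _)
      have hqne : q ≠ 0 := by
        intro h0
        rw [h0, mul_zero] at hq
        exact (monic_iter f hm hdeg (n + 1)).ne_zero hq
      have hqdeg : q.natDegree ≠ 0 := by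
        intro h0
        obtain ⟨u, rfl⟩ := natDegree_eq_zero.mp h0
        have hu : u ≠ 0 := by simpa using hqne
        apply hred
        have hassoc : Associated (minpoly K (th (n + 1))) (iter f (n + 1)) := by
          refine ⟨(Polynomial.isUnit_C.mpr hu.isUnit).unit, ?_⟩
          rw [IsUnit.unit_spec, ← hq]
        exact hassoc.irreducible (minpoly.irreducible (hint _))
      have hmul := natDegree_mul hμne hqne
      rw [← hq, hdegit] at hmul
      omega
    have hbig : 2 ^ (n + 1) ≤ finrank K K⟮th (n + 1)⟯ := by
      haveI := hfd n
      set E := L n with hE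
      set M := E⟮th (n + 1)⟯ with hM
      haveI : FiniteDimensional ↥E ↥M :=
        adjoin.finiteDimensional (IsIntegral.tower_top (hint (th (n + 1))))
      have hre : IntermediateField.restrictScalars K M = K⟮th (n + 1)⟯ := by
        rw [hM, restrictScalars_adjoin_eq_sup]
        exact sup_eq_right.mpr hup
      have hfr : finrank K K⟮th (n + 1)⟯ = finrank K ↥E * finrank ↥E ↥M := by
        rw [← hre]
        exact (Module.finrank_mul_finrank K ↥E ↥M).symm
      have h2le : 2 ≤ finrank ↥E ↥M := by
        have hne1 : finrank ↥E ↥M ≠ 1 := by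
          intro h1
          have hbot : M = ⊥ := IntermediateField.finrank_eq_one_iff.mp h1
          have hmem2 : th (n + 1) ∈ (⊥ : IntermediateField ↥E Ω) :=
            hbot ▸ mem_adjoin_simple_self ↥E (th (n + 1))
          rw [IntermediateField.mem_bot] at hmem2
          obtain ⟨y, hy⟩ := hmem2
          apply hnm
          rw [← hy]
          exact y.2
        have hpos : 0 < finrank ↥E ↥M := finrank_pos
        omega
      rw [hfr, hfinL n le_rfl]
      calc 2 ^ (n + 1) = 2 ^ n * 2 := by ring
      _ ≤ 2 ^ n * finrank ↥E ↥M := Nat.mul_le_mul_left _ h2le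
    omega
  -- one descent step
  have hstep : ∀ k m : ℕ, 1 ≤ k → k ≤ n → ∀ ε : Ω, (ε = 1 ∨ ε = -1) →
      ∀ γ : Ω, γ ∈ L k → γ ^ 2 = ε * (aa m - th k) →
      ∃ z : Ω, z ∈ L (k - 1) ∧ z ^ 2 = aa (m + 1) - th (k - 1) := by
    intro k m hk1 hkn ε hε γ hγ hγsq
    obtain ⟨U, V, hU, hV, hUV⟩ := hdecomp k hk1 (by omega) γ hγ
    have hkey : (th k - c') ^ 2 = th (k - 1) - aa 1 := by
      have := hsqth (k - 1) (by omega)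
      rwa [show k - 1 + 1 = k from by omega] at this
    have hε2 : ε ^ 2 = 1 := by rcases hε with rfl | rfl <;> norm_num
    have hεm : ε ∈ L (k - 1) := by
      rcases hε with rfl | rfl
      exacts [one_mem _, neg_mem (one_mem _)]
    have hδm : th (k - 1) - aa 1 ∈ L (k - 1) := sub_mem (hthmem (k - 1)) (haamem 1 _)
    have hmatch : (U ^ 2 + (th (k - 1) - aa 1) * V ^ 2) + (th k - c') * (2 * U * V)
        = ε * (aa m - c') + (th k - c') * (-ε) := by
      have hlhs : (U ^ 2 + (th (k - 1) - aa 1) * V ^ 2) + (th k - c') * (2 * U * V)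
          = γ ^ 2 := by
        rw [hUV, ← hkey]; ring
      rw [hlhs, hγsq]; ring
    obtain ⟨h1, h2⟩ := huniq k hk1 hkn _ _ _ _
      (add_mem (pow_mem hU 2) (mul_mem hδm (pow_mem hV 2)))
      (mul_mem (mul_mem (htwo _) hU) hV)
      (mul_mem hεm (sub_mem (haamem m _) (hc'mem _)))
      (neg_mem hεm) hmatch
    refine ⟨U ^ 2 - (th (k - 1) - aa 1) * V ^ 2,
      sub_mem (pow_mem hU 2) (mul_mem hδm (pow_mem hV 2)), ?_⟩
    have hz2 : (U ^ 2 - (th (k - 1) - aa 1) * V ^ 2) ^ 2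
        = (U ^ 2 + (th (k - 1) - aa 1) * V ^ 2) ^ 2
          - (th (k - 1) - aa 1) * (2 * U * V) ^ 2 := by ring
    rw [hz2, h1, h2]
    have hfin2 : (ε * (aa m - c')) ^ 2 - (th (k - 1) - aa 1) * (-ε) ^ 2
        = ε ^ 2 * ((aa m - c') ^ 2 - (th (k - 1) - aa 1)) := by ring
    rw [hfin2, hε2, hsq m]
    ring
  -- descent chain
  have hA : ∀ j : ℕ, 1 ≤ j → j ≤ n - 1 →
      ∃ γ : Ω, γ ∈ L (n - j) ∧ γ ^ 2 = aa (j + 1) - th (n - j) := by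
    intro j
    induction j with
    | zero => omega
    | succ j ihj =>
        intro _ hjn
        rcases Nat.eq_zero_or_pos j with rfl | hj1
        · have hγ0 : th (n + 1) - c' ∈ L n := sub_mem hθtop (hc'mem _)
          have hsq0 : (th (n + 1) - c') ^ 2 = (-1 : Ω) * (aa 1 - th n) := by
            rw [hsqth n le_rfl]; ring
          obtain ⟨z, hz, hzsq⟩ := hstep n 1 (by omega) le_rfl (-1) (Or.inr rfl) _ hγ0 hsq0
          exact ⟨z, by simpa using hz, by simpa using hzsq⟩
        · obtain ⟨γ, hγ, hγsq⟩ := ihj hj1 (by omega)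
          obtain ⟨z, hz, hzsq⟩ := hstep (n - j) (j + 1) (by omega) (by omega) 1 (Or.inl rfl)
            γ hγ (by rw [hγsq]; ring)
          refine ⟨z, ?_, ?_⟩
          · rwa [show n - j - 1 = n - (j + 1) from by omega] at hz
          · rwa [show n - j - 1 = n - (j + 1) from by omega] at hzsq
  -- choice of the endpoint
  obtain ⟨q, r, hr, hqr⟩ : ∃ q r, r < s ∧ n - (s + 1) = q * s + r := by
    refine ⟨(n - (s + 1)) / s, (n - (s + 1)) % s, Nat.mod_lt _ hs, ?_⟩
    rw [Nat.mul_comm]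
    exact (Nat.div_add_mod _ _).symm
  set k₀ := r + 1 with hk₀
  have hk₀1 : 1 ≤ k₀ := by omega
  have hk₀s : k₀ ≤ s := by omega
  have hk₀n : k₀ ≤ n - 1 := by omega
  obtain ⟨γ, hγ, hγsq⟩ := hA (n - k₀) (by omega) (by omega)
  have hnk : n - (n - k₀) = k₀ := by omega
  rw [hnk] at hγ hγsq
  have hγsq' : γ ^ 2 = (2 * c' - aa 1) - th k₀ := by
    rw [hγsq]
    congr 1
    rw [← hao']
    rw [show n - k₀ + 1 = (s + 1) + q * s from by omega]
    show algebraMap K Ω (aK ((s + 1) + q * s)) = algebraMap K Ω (aK (s + 1))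
    rw [hmult q (s + 1) (by omega)]
  -- final contradiction
  obtain ⟨U, V, hU, hV, hUV⟩ := hdecomp k₀ (by omega) (by omega) γ hγ
  have hkeyk : (th k₀ - c') ^ 2 = th (k₀ - 1) - aa 1 := by
    have := hsqth (k₀ - 1) (by omega)
    rwa [show k₀ - 1 + 1 = k₀ from by omega] at this
  have hδm : th (k₀ - 1) - aa 1 ∈ L (k₀ - 1) := sub_mem (hthmem (k₀ - 1)) (haamem 1 _)
  have hmatch : (U ^ 2 + (th (k₀ - 1) - aa 1) * V ^ 2) + (th k₀ - c') * (2 * U * V)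
      = (c' - aa 1) + (th k₀ - c') * (-1) := by
    have hlhs : (U ^ 2 + (th (k₀ - 1) - aa 1) * V ^ 2) + (th k₀ - c') * (2 * U * V)
        = γ ^ 2 := by
      rw [hUV, ← hkeyk]; ring
    rw [hlhs, hγsq']; ring
  obtain ⟨h1, h2⟩ := huniq k₀ (by omega) (by omega) _ _ _ _
    (add_mem (pow_mem hU 2) (mul_mem hδm (pow_mem hV 2)))
    (mul_mem (mul_mem (htwo _) hU) hV)
    (sub_mem (hc'mem _) (haamem 1 _))
    (neg_mem (one_mem _)) hmatch
  have hupk : L (k₀ - 1) ≤ L k₀ := by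
    have := hLle (k₀ - 1) (by omega)
    rwa [show k₀ - 1 + 1 = k₀ from by omega] at this
  have hwmem : U - (th k₀ - c') * V ∈ L k₀ :=
    sub_mem (hupk hU) (mul_mem (sub_mem (hthmem k₀) (hc'mem _)) (hupk hV))
  have hwsq : (U - (th k₀ - c') * V) ^ 2 = th k₀ - aa 1 := by
    have hz2 : (U - (th k₀ - c') * V) ^ 2
        = (U ^ 2 + (th (k₀ - 1) - aa 1) * V ^ 2) - (th k₀ - c') * (2 * U * V) := by
      rw [← hkeyk]; ring
    rw [hz2, h1, h2]
    ring
  have hfact : (th (k₀ + 1) - c' - (U - (th k₀ - c') * V))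
      * (th (k₀ + 1) - c' + (U - (th k₀ - c') * V)) = 0 := by
    have h3 := hsqth k₀ (by omega)
    linear_combination h3 - hwsq
  have hθk1 : th (k₀ + 1) ∈ L k₀ := by
    rcases mul_eq_zero.mp hfact with h | h
    · have hth1 : th (k₀ + 1) = c' + (U - (th k₀ - c') * V) := by linear_combination h
      rw [hth1]
      exact add_mem (hc'mem _) hwmem
    · have hth1 : th (k₀ + 1) = c' - (U - (th k₀ - c') * V) := by linear_combination h
      rw [hth1]
      exact sub_mem (hc'mem _) hwmem
  have hle : L (k₀ + 1) ≤ L k₀ := adjoin_simple_le_iff.mpr hθk1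
  haveI := hfd k₀
  have hcon := finrank_mono_IF hle
  rw [hfinL (k₀ + 1) (by omega), hfinL k₀ (by omega)] at hcon
  have hp2 : (2 : ℕ) ^ (k₀ + 1) = 2 * 2 ^ k₀ := by rw [pow_succ]; ring
  have hp1 : (1 : ℕ) ≤ 2 ^ k₀ := Nat.one_le_two_pow
  omega


end KeyStep
section PartII

lemma orbit_structure {α : Type*} (g : α → α) (c : α) (o : ℕ)
    (hfin : {y | ∃ i, 1 ≤ i ∧ g^[i] c = y}.Finite)
    (hcard : {y | ∃ i, 1 ≤ i ∧ g^[i] c = y}.ncard = o)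
    (htail : {y | (∃ i, 1 ≤ i ∧ g^[i] c = y) ∧ ∀ j, 1 ≤ j → g^[j] y ≠ y}.ncard = 1) :
    ∃ s, s + 1 = o ∧ 1 ≤ s ∧ (∀ i, 2 ≤ i → g^[i + s] c = g^[i] c) ∧
      (∀ j, 1 ≤ j → g^[j] (g c) ≠ g c) := by
  classical
  set a : ℕ → α := fun i => g^[i] c with ha
  set O : Set α := {y | ∃ i, 1 ≤ i ∧ g^[i] c = y} with hO
  -- basic: a i ∈ O for i ≥ 1
  have hmem : ∀ i, 1 ≤ i → a i ∈ O := fun i hi => ⟨i, hi, rfl⟩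
  -- periodicity propagation
  have per : ∀ r s₁, r ≤ s₁ → a r = a s₁ → ∀ i, r ≤ i → a (i + (s₁ - r)) = a i := by
    intro r s₁ hrs hres i hri
    have h1 : i + (s₁ - r) = (i - r) + s₁ := by omega
    have h2 : i = (i - r) + r := by omega
    rw [ha]
    simp only
    rw [h1, Function.iterate_add_apply]
    conv_rhs => rw [h2, Function.iterate_add_apply]
    rw [ha] at hres
    simp only at hres
    rw [← hres]
  -- isPer
  set isPer : α → Prop := fun y => ∃ j, 1 ≤ j ∧ g^[j] y = y with hisPer
  have hper_iter : ∀ i j, g^[j] (a i) = a (j + i) := by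
    intro i j; rw [ha]; simp only [← Function.iterate_add_apply]
  have hup : ∀ i k, isPer (a i) → isPer (a (i + k)) := by
    intro i k
    induction k with
    | zero => intro hp; simpa using hp
    | succ k ihk =>
        intro hp
        obtain ⟨j, hj1, hj2⟩ := ihk hp
        refine ⟨j, hj1, ?_⟩
        have : a (i + (k+1)) = g (a (i+k)) := by
          rw [ha]; simp only
          rw [show i + (k+1) = (i+k)+1 from by omega, Function.iterate_succ_apply']
        rw [this, ← Function.iterate_succ_apply g j, Function.iterate_succ_apply' g j, hj2]
  -- existence of a periodic index ≥ 1
  have hex : ∃ m, 1 ≤ m ∧ isPer (a m) := by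
    have hinj : ¬ Function.Injective (fun i : ℕ => a (i + 1)) := by
      intro hinj
      have : (Set.range (fun i : ℕ => a (i+1))).Infinite :=
        Set.infinite_range_of_injective hinj
      exact this (hfin.subset (by rintro y ⟨i, rfl⟩; exact hmem _ (by omega)))
    rw [Function.not_injective_iff] at hinj
    obtain ⟨i, j, hij, hne⟩ := hinj
    rcases Nat.lt_or_ge i j with h | h
    · refine ⟨i + 1, by omega, j - i, by omega, ?_⟩
      rw [hper_iter]
      have : j - i + (i + 1) = j + 1 := by omega
      rw [this, hij]
    · have hlt : j < i := by omega
      refine ⟨j + 1, by omega, i - j, by omega, ?_⟩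
      rw [hper_iter]
      have : i - j + (j + 1) = i + 1 := by omega
      rw [this, ← hij]
  -- minimal periodic index m
  obtain ⟨hm1, hmper⟩ := Nat.find_spec hex
  set m := Nat.find hex with hmdef
  have hmmin : ∀ k, k < m → ¬(1 ≤ k ∧ isPer (a k)) := fun k hk => Nat.find_min hex hk
  -- the tail set
  set T : Set α := {y | (∃ i, 1 ≤ i ∧ g^[i] c = y) ∧ ∀ j, 1 ≤ j → g^[j] y ≠ y} with hT
  have hTO : T ⊆ O := fun y hy => hy.1
  have hTfin : T.Finite := hfin.subset hTO
  -- m ≠ 1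
  have hm_ne1 : m ≠ 1 := by
    intro h1
    have hall : ∀ i, 1 ≤ i → isPer (a i) := by
      intro i hi
      have := hup m (i - m) hmper
      rw [h1] at this
      have h2 : 1 + (i - 1) = i := by omega
      rwa [h2] at this
    have hTempty : T = ∅ := by
      ext y
      simp only [Set.mem_empty_iff_false, iff_false]
      rintro ⟨⟨i, hi1, rfl⟩, hnp⟩
      obtain ⟨j, hj1, hj2⟩ := hall i hi1
      exact hnp j hj1 hj2
    rw [hTempty] at htail
    simp at htail
  -- m ≤ 2
  have hm_le2 : m ≤ 2 := by
    by_contra hgt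
    push_neg at hgt
    have h1T : a 1 ∈ T := by
      refine ⟨hmem 1 le_rfl, ?_⟩
      intro j hj1 hj2
      exact hmmin 1 (by omega) ⟨le_rfl, j, hj1, hj2⟩
    have h2T : a 2 ∈ T := by
      refine ⟨hmem 2 (by omega), ?_⟩
      intro j hj1 hj2
      exact hmmin 2 (by omega) ⟨by omega, j, hj1, hj2⟩
    have hne12 : a 1 ≠ a 2 := by
      intro heq
      refine hmmin 1 (by omega) ⟨le_rfl, 1, le_rfl, ?_⟩
      rw [hper_iter 1 1]
      simpa using heq.symm
    have hsub : {a 1, a 2} ⊆ T := by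
      rintro y (rfl | rfl)
      exacts [h1T, by simpa using h2T]
    have := Set.ncard_le_ncard hsub hTfin
    rw [Set.ncard_pair hne12, htail] at this
    omega
  have hm2 : m = 2 := by omega
  have hnp1 : ∀ j, 1 ≤ j → g^[j] (a 1) ≠ a 1 := by
    intro j hj1 hj2
    exact hmmin 1 (by omega) ⟨le_rfl, j, hj1, hj2⟩
  have hp2 : isPer (a 2) := hm2 ▸ hmper
  -- minimal period s of a 2
  have hex2 : ∃ j, 1 ≤ j ∧ a (2 + j) = a 2 := by
    obtain ⟨j, hj1, hj2⟩ := hp2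
    refine ⟨j, hj1, ?_⟩
    rw [show 2 + j = j + 2 from by omega, ← hper_iter 2 j, hj2]
  obtain ⟨hs1, hs2⟩ := Nat.find_spec hex2
  set s := Nat.find hex2 with hsdef
  have hsmin : ∀ k, k < s → ¬(1 ≤ k ∧ a (2 + k) = a 2) := fun k hk => Nat.find_min hex2 hk
  -- periodicity from index 2
  have hper2 : ∀ i, 2 ≤ i → a (i + s) = a i := by
    intro i hi
    have := per 2 (2 + s) (by omega) hs2.symm i hi
    rwa [show 2 + s - 2 = s from by omega] at this
  -- multiples
  have hmult : ∀ k i, 2 ≤ i → a (i + k * s) = a i := by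
    intro k
    induction k with
    | zero => intro i _; simp
    | succ k ihk =>
        intro i hi
        have h1 : i + (k+1) * s = (i + k * s) + s := by ring
        rw [h1, hper2 _ (by omega), ihk i hi]
  -- distinctness on [1, s+1]
  have key : ∀ i j, 1 ≤ i → j ≤ s + 1 → i < j → a i = a j → False := by
    intro i j hi1 hj2 hlt hij
    rcases eq_or_ne i 1 with rfl | hi_ne1
    · -- a 1 = a j, j ≥ 2 : makes a 1 periodic
      refine hnp1 (j - 1) (by omega) ?_
      rw [hper_iter 1 (j - 1), show j - 1 + 1 = j from by omega, ← hij]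
      
    · -- 2 ≤ i < j ≤ s + 1
      have hi2' : 2 ≤ i := by omega
      set d := j - i with hd
      have hd1 : 1 ≤ d := by omega
      have hdlt : d < s := by omega
      -- a 2 = a (2 + d), contradicting minimality of s
      have hperd : ∀ l, i ≤ l → a (l + d) = a l := by
        intro l hl
        have := per i j (by omega) hij l hl
        rwa [← hd] at this
      have hA : a (2 + i * s) = a 2 := hmult i 2 le_rfl
      have hB : a (2 + i * s + d) = a (2 + i * s) := hperd _ (by nlinarith)
      have hC : a (2 + d + i * s) = a (2 + d) := hmult i (2 + d) (by omega)
      refine hsmin d hdlt ⟨hd1, ?_⟩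
      rw [show 2 + d + i * s = 2 + i * s + d from by ring] at hC
      rw [← hC, hB, hA]
  have hinj : Set.InjOn a (Set.Icc 1 (s + 1)) := by
    rintro i ⟨hi1, hi2⟩ j ⟨hj1, hj2⟩ hij
    by_contra hne
    rcases Nat.lt_or_ge i j with h | h
    · exact key i j hi1 hj2 h hij
    · exact key j i hj1 hi2 (by omega) hij.symm
  -- O is the image of [1, s+1]
  have hOeq : O = a '' (Set.Icc 1 (s + 1)) := by
    ext y
    constructor
    · rintro ⟨i, hi1, rfl⟩
      rcases Nat.lt_or_ge i (s + 2) with h | h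
      · exact ⟨i, ⟨hi1, by omega⟩, rfl⟩
      · have hi2 : 2 ≤ i := by omega
        have hieq : i = (2 + (i - 2) % s) + ((i - 2) / s) * s := by
          calc i = 2 + (i - 2) := by omega
          _ = 2 + (s * ((i - 2) / s) + (i - 2) % s) := by rw [Nat.div_add_mod]
          _ = (2 + (i - 2) % s) + ((i - 2) / s) * s := by ring
        have hred : a i = a (2 + (i - 2) % s) := by
          conv_lhs => rw [hieq]
          exact hmult _ _ (by omega)
        have hmlt : (i - 2) % s < s := Nat.mod_lt _ hs1
        exact ⟨2 + (i - 2) % s, ⟨by omega, by omega⟩, hred.symm⟩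
    · rintro ⟨i, ⟨hi1, _⟩, rfl⟩
      exact hmem i hi1
  -- cardinality
  have hcard2 : O.ncard = s + 1 := by
    rw [hOeq, Set.ncard_image_of_injOn hinj, ← Finset.coe_Icc, Set.ncard_coe_finset,
      Nat.card_Icc]
    omega
  rw [hcard2] at hcard
  refine ⟨s, hcard, hs1, ?_, ?_⟩
  · intro i hi
    exact hper2 i hi
  · intro j hj
    have h1 : a 1 = g c := by rw [ha]; simp
    have := hnp1 j hj
    rwa [h1] at this

end PartII

/-- A monic PCF quadratic over a field of characteristic ≠ 2 with tail size 1 and orbit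
size `o` has all iterates irreducible iff its `o`-th iterate is irreducible. -/
theorem stmt18 {K : Type*} [Field K] (hchar : (2 : K) ≠ 0)
    (f : Polynomial K) (hm : f.Monic) (hdeg : f.natDegree = 2)
    (c : K) (hc : (Polynomial.derivative f).eval c = 0)
    (o : ℕ)
    (hfin : {y : K | ∃ i : ℕ, 1 ≤ i ∧ (fun x => f.eval x)^[i] c = y}.Finite)
    (hcard : {y : K | ∃ i : ℕ, 1 ≤ i ∧ (fun x => f.eval x)^[i] c = y}.ncard = o)
    (htail : {y : K | (∃ i : ℕ, 1 ≤ i ∧ (fun x => f.eval x)^[i] c = y) ∧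
        ∀ j : ℕ, 1 ≤ j → (fun x => f.eval x)^[j] y ≠ y}.ncard = 1) :
    (∀ n : ℕ, 1 ≤ n → Irreducible (iter f n)) ↔ Irreducible (iter f o) := by
  obtain ⟨s, hso, hs, hper, hnp⟩ := orbit_structure (fun x => f.eval x) c o hfin hcard htail
  constructor
  · intro h
    exact h o (by omega)
  · intro hIo
    have hnf : f = (X - C c) ^ 2 + C (f.eval c) := f_normal_form f hm hdeg c hc
    have hevK : ∀ x : K, f.eval x = (x - c) ^ 2 + f.eval c := by
      intro x
      conv_lhs => rw [hnf]
      simp [eval_pow]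
    set g : K → K := fun x => f.eval x with hg
    -- a_o = 2c - a₁
    have hao : g^[s + 1] c = 2 * c - f.eval c := by
      have h1 : f.eval (g^[s + 1] c) = f.eval (g c) := by
        have h2 : f.eval (g^[s + 1] c) = g^[s + 2] c := by
          conv_rhs => rw [show s + 2 = (s + 1) + 1 from by omega,
            Function.iterate_succ_apply']
        have h3 : f.eval (g c) = g^[2] c := by
          conv_rhs => rw [show (2 : ℕ) = 1 + 1 from rfl, Function.iterate_succ_apply',
            Function.iterate_one]
        rw [h2, h3, show s + 2 = 2 + s from by omega, hper 2 le_rfl]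
      have h4 : (g^[s + 1] c - c) ^ 2 = (g c - c) ^ 2 := by
        have := hevK (g^[s + 1] c)
        have h5 := hevK (g c)
        linear_combination h1 - this + h5
      have h6 : (g^[s + 1] c - g c) * (g^[s + 1] c + g c - 2 * c) = 0 := by
        linear_combination h4
      rcases mul_eq_zero.mp h6 with h | h
      · exfalso
        apply hnp s hs
        have h7 : g^[s] (g c) = g^[s + 1] c := by
          rw [← Function.iterate_succ_apply]
        rw [h7]
        linear_combination h
      · have : g c = f.eval c := by rw [hg]
        linear_combination h - this
    -- irreducibility up to o
    have hIm : ∀ m, 1 ≤ m → m ≤ s + 1 → Irreducible (iter f m) := by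
      intro m hm1 hm2
      have hcomp : iter f o = (iter f m).comp (iter f (o - m)) := by
        conv_lhs => rw [show o = m + (o - m) from by omega]
        exact iter_add f m (o - m)
      rw [hcomp] at hIo
      refine irreducible_of_comp hIo ?_
      rw [natDegree_iter f hdeg]
      positivity
    -- full induction
    have hall : ∀ n : ℕ, ∀ m, 1 ≤ m → m ≤ (s + 1) + n → Irreducible (iter f m) := by
      intro n
      induction n with
      | zero => exact fun m h1 h2 => hIm m h1 (by omega)
      | succ n ih =>
          intro m hm1 hm2
          rcases Nat.lt_or_ge m ((s + 1) + n + 1) with h | h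
          · exact ih m hm1 (by omega)
          · have hmeq : m = ((s + 1) + n) + 1 := by omega
            rw [hmeq]
            exact key_step f hm hdeg c hnf s ((s + 1) + n) hs (by omega) hper hao
              (fun m' h1 h2 => ih m' h1 h2)
    intro n hn
    exact hall n n hn (by omega)
end
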